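/- arXiv:1011.0319 — 2 statements merged into one kernel-verified Lean document; each statement's English description precedes it below -/
import Mathlib

section
/- Let q ≥ 3 and z ∈ (0,(q−2)/q). Set β_z = (2(q−1)/(zq)) log((1+z)/(1−z)) and h_z = log(q−1) − β_z (q−2)/(2(q−1)); then (β_z,h_z) lies on the critical line h_T, and the set of global minimum points of f_{β_z,h_z} on ℋ is exactly {x_z, x_{−z}}. -/
open Finset

noncomputable section

namespace CWP

/-- The probability simplex ℋ in ℝ^q. -/
def simplexH (q : ℕ) : Set (Fin q → ℝ) :=
  {x | (∑ i, x i) = 1 ∧ ∀ i, 0 ≤ x i}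

/-- The free-energy functional f_{β,h} of the Curie-Weiss-Potts model. -/
def fFE (q : ℕ) [NeZero q] (β h : ℝ) (x : Fin q → ℝ) : ℝ :=
  (∑ i, x i * Real.log (q * x i)) - β / 2 * (∑ i, x i ^ 2) - h * x 0

/-- The set of global minimum points of f_{β,h} on the simplex ℋ. -/
def minSetF (q : ℕ) [NeZero q] (β h : ℝ) : Set (Fin q → ℝ) :=
  {x | x ∈ simplexH q ∧ ∀ y ∈ simplexH q, fFE q β h x ≤ fFE q β h y}



open Set

/-- Compute the second iterated derivative from a `HasDerivAt` chain on an open set. -/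
lemma deriv2_eq_of {f f' f'' : ℝ → ℝ} {s : Set ℝ} (hs : IsOpen s)
    (h1 : ∀ x ∈ s, HasDerivAt f (f' x) x) (h2 : ∀ x ∈ s, HasDerivAt f' (f'' x) x)
    {x : ℝ} (hx : x ∈ s) : deriv^[2] f x = f'' x := by
  have hd : Set.EqOn (deriv f) f' s := fun y hy => (h1 y hy).deriv
  have h3 : deriv (deriv f) x = deriv f' x :=
    (hd.eventuallyEq_of_mem (hs.mem_nhds hx)).deriv_eq
  have : deriv^[2] f x = deriv (deriv f) x := by
    simp [Function.iterate_succ, Function.iterate_one]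
  rw [this, h3, (h2 x hx).deriv]

lemma two_point_convex {f : ℝ → ℝ} {D : Set ℝ} (hf : StrictConvexOn ℝ D f) {a b : ℝ}
    (ha : a ∈ D) (hb : b ∈ D) (hab : a ≠ b) :
    f ((a + b) / 2) + f ((a + b) / 2) < f a + f b := by
  have := hf.2 ha hb hab (by norm_num : (0:ℝ) < 1/2) (by norm_num : (0:ℝ) < 1/2) (by norm_num)
  simp only [smul_eq_mul] at this
  have e : (1/2 : ℝ) * a + (1/2 : ℝ) * b = (a + b) / 2 := by ring
  rw [e] at this
  linarith

lemma two_point_spread {f : ℝ → ℝ} {D : Set ℝ} (hf : StrictConcaveOn ℝ D f) {p a b s : ℝ}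
    (hp : p ∈ D) (hs : s ∈ D) (hpa : p < a) (hab : a ≤ b) (hbs : b < s)
    (hsum : a + b = p + s) : f p + f s < f a + f b := by
  have hps : p < s := lt_of_lt_of_le hpa (le_trans hab (le_of_lt hbs))
  have hT : (0:ℝ) < s - p := by linarith
  set la := (s - a) / (s - p) with hla
  set lb := (s - b) / (s - p) with hlb
  have hla1 : 0 < la := div_pos (by linarith) hT
  have hla2 : 0 < 1 - la := by
    rw [hla]; rw [sub_pos, div_lt_one hT]; linarith
  have hlb1 : 0 < lb := div_pos (by linarith) hT
  have hlb2 : 0 < 1 - lb := by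
    rw [hlb]; rw [sub_pos, div_lt_one hT]; linarith
  have hA := hf.2 hp hs (ne_of_lt hps) hla1 hla2 (by ring)
  have hB := hf.2 hp hs (ne_of_lt hps) hlb1 hlb2 (by ring)
  simp only [smul_eq_mul] at hA hB
  have eA : la * p + (1 - la) * s = a := by
    rw [hla]; field_simp; ring
  have eB : lb * p + (1 - lb) * s = b := by
    rw [hlb]; field_simp; ring
  rw [eA] at hA; rw [eB] at hB
  have hsum2 : la + lb = 1 := by
    rw [hla, hlb]; rw [← add_div, div_eq_one_iff_eq (ne_of_gt hT)]; linarith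
  have key : f p + f s = (la * f p + (1 - la) * f s) + (lb * f p + (1 - lb) * f s) := by
    linear_combination (f s - f p) * hsum2
  linarith

/-- log-odds function. -/
def lodds (t : ℝ) : ℝ := Real.log (1 + t) - Real.log (1 - t)

lemma hasDerivAt_lodds {t : ℝ} (h1 : -1 < t) (h2 : t < 1) :
    HasDerivAt lodds ((1 + t)⁻¹ + (1 - t)⁻¹) t := by
  have d1 : HasDerivAt (fun t : ℝ => Real.log (1 + t)) ((1 + t)⁻¹) t := by
    have := (Real.hasDerivAt_log (by linarith : (1:ℝ) + t ≠ 0)).comp t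
      ((hasDerivAt_id t).const_add 1)
    simpa [Function.comp_def] using this
  have d2 : HasDerivAt (fun t : ℝ => Real.log (1 - t)) (-(1 - t)⁻¹) t := by
    have := (Real.hasDerivAt_log (by linarith : (1:ℝ) - t ≠ 0)).comp t
      ((hasDerivAt_id t).const_sub 1)
    simpa [Function.comp_def] using this
  exact (d1.sub d2).congr_deriv (by ring)

lemma lodds_zero : lodds 0 = 0 := by simp [lodds]

lemma lodds_pos {z : ℝ} (h0 : 0 < z) (h1 : z < 1) : 0 < lodds z := by
  have : Real.log (1 - z) < Real.log (1 + z) :=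
    Real.log_lt_log (by linarith) (by linarith)
  simp [lodds]; linarith

/-- I1 : 2z < lodds z on (0,1) -/
lemma two_mul_lt_lodds {z : ℝ} (h0 : 0 < z) (h1 : z < 1) : 2 * z < lodds z := by
  set F : ℝ → ℝ := fun t => lodds t - 2 * t with hF
  have hd : ∀ t ∈ Ioo (-1:ℝ) 1, HasDerivAt F ((1 + t)⁻¹ + (1 - t)⁻¹ - 2) t := by
    intro t ht
    have dlin : HasDerivAt (fun t : ℝ => 2 * t) 2 t := by
      simpa using (hasDerivAt_id t).const_mul (2:ℝ)
    exact (hasDerivAt_lodds ht.1 ht.2).sub dlin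
  have hmono : StrictMonoOn F (Ico (0:ℝ) 1) := by
    apply strictMonoOn_of_deriv_pos (convex_Ico 0 1)
    · intro t ht
      exact ((hd t ⟨by linarith [ht.1], ht.2⟩).continuousAt).continuousWithinAt
    · intro t ht
      rw [interior_Ico] at ht
      rw [(hd t ⟨by linarith [ht.1], ht.2⟩).deriv]
      have e1 : (0:ℝ) < 1 + t := by linarith [ht.1]
      have e2 : (0:ℝ) < 1 - t := by linarith [ht.2]
      have e3 : (1+t)⁻¹ + (1-t)⁻¹ - 2 = (2*t^2) / ((1+t)*(1-t)) := by
        field_simp; ring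
      have ht0 : 0 < t := ht.1
      rw [e3]
      exact div_pos (by nlinarith : (0:ℝ) < 2*t^2) (mul_pos e1 e2)
  have := hmono (by constructor <;> linarith) (by constructor <;> linarith) h0
  simp only [hF, lodds_zero] at this
  linarith

/-- I2 : lodds z < 2z/(1-z²) on (0,1) -/
lemma lodds_lt {z : ℝ} (h0 : 0 < z) (h1 : z < 1) : lodds z < 2 * z / (1 - z^2) := by
  set F : ℝ → ℝ := fun t => 2 * t / (1 - t^2) - lodds t with hF
  have hd : ∀ t ∈ Ioo (-1:ℝ) 1, HasDerivAt F
      ((2 * (1 - t^2) - 2*t*(-2*t)) / (1 - t^2)^2 - ((1 + t)⁻¹ + (1 - t)⁻¹)) t := by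
    intro t ht
    have hden : (1:ℝ) - t^2 ≠ 0 := by nlinarith [ht.1, ht.2]
    have d1 : HasDerivAt (fun t : ℝ => 2 * t / (1 - t^2))
        ((2 * (1 - t^2) - 2*t*(-2*t)) / (1 - t^2)^2) t := by
      have dn : HasDerivAt (fun t : ℝ => 2 * t) 2 t := by
        simpa using (hasDerivAt_id t).const_mul (2:ℝ)
      have dd : HasDerivAt (fun t : ℝ => 1 - t^2) (-2*t) t := by
        have := ((hasDerivAt_pow 2 t)).const_sub 1
        simpa using this
      simpa [Pi.div_def] using dn.div dd hden
    exact d1.sub (hasDerivAt_lodds ht.1 ht.2)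
  have hmono : StrictMonoOn F (Ico (0:ℝ) 1) := by
    apply strictMonoOn_of_deriv_pos (convex_Ico 0 1)
    · intro t ht
      exact ((hd t ⟨by linarith [ht.1], ht.2⟩).continuousAt).continuousWithinAt
    · intro t ht
      rw [interior_Ico] at ht
      rw [(hd t ⟨by linarith [ht.1], ht.2⟩).deriv]
      have e1 : (0:ℝ) < 1 + t := by linarith [ht.1]
      have e2 : (0:ℝ) < 1 - t := by linarith [ht.2]
      have hq : (1:ℝ) - t^2 = (1+t)*(1-t) := by ring
      have e3 : (2 * (1 - t^2) - 2*t*(-2*t)) / (1 - t^2)^2 - ((1 + t)⁻¹ + (1 - t)⁻¹)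
          = (4*t^2) / ((1+t)*(1-t))^2 := by
        rw [hq]; field_simp; ring
      rw [e3]
      have ht0 : 0 < t := ht.1
      exact div_pos (by nlinarith : (0:ℝ) < 4*t^2) (pow_pos (mul_pos e1 e2) 2)
  have := hmono (by constructor <;> linarith) (by constructor <;> linarith) h0
  simp only [hF, lodds_zero] at this
  linarith

/-- I3 : c · lodds z < z · lodds c for 0 < z < c < 1 -/
lemma lodds_convex_ineq {z c : ℝ} (h0 : 0 < z) (hzc : z < c) (hc : c < 1) :
    c * lodds z < z * lodds c := by
  have hconv : StrictConvexOn ℝ (Icc 0 c) lodds := by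
    apply strictConvexOn_of_deriv2_pos (convex_Icc 0 c)
    · intro t ht
      have h1 : -1 < t := by linarith [ht.1]
      have h2 : t < 1 := by linarith [ht.2]
      exact (hasDerivAt_lodds h1 h2).continuousAt.continuousWithinAt
    · intro t ht
      rw [interior_Icc] at ht
      have h1 : (0:ℝ) < t := ht.1
      have h2 : t < 1 := by linarith [ht.2]
      have hder2 : deriv^[2] lodds t = -1/(1+t)^2 + 1/(1-t)^2 := by
        apply deriv2_eq_of (isOpen_Ioo (a := (-1:ℝ)) (b := 1))
          (fun x hx => hasDerivAt_lodds hx.1 hx.2)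
        · intro x hx
          have e1 : (1:ℝ) + x ≠ 0 := by linarith [hx.1]
          have e2 : (1:ℝ) - x ≠ 0 := by linarith [hx.2]
          have d1 : HasDerivAt (fun x : ℝ => (1 + x)⁻¹) (-1/(1+x)^2) x := by
            have := ((hasDerivAt_id x).const_add 1).inv e1
            simpa [Pi.inv_def] using this
          have d2 : HasDerivAt (fun x : ℝ => (1 - x)⁻¹) (1/(1-x)^2) x := by
            have := ((hasDerivAt_id x).const_sub 1).inv e2
            simpa [Pi.inv_def] using this
          exact d1.add d2
        · exact ⟨by linarith, by linarith⟩
      rw [hder2]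
      have e1 : (0:ℝ) < 1 + t := by linarith
      have e2 : (0:ℝ) < 1 - t := by linarith
      have e4 : -1/(1+t)^2 + 1/(1-t)^2 = (4*t) / ((1+t)^2 * (1-t)^2) := by
        field_simp; ring
      rw [e4]
      exact div_pos (by linarith : (0:ℝ) < 4*t) (mul_pos (pow_pos e1 2) (pow_pos e2 2))
  have h01 : (0:ℝ) ∈ Icc (0:ℝ) c := ⟨le_refl 0, by linarith⟩
  have hcc : c ∈ Icc (0:ℝ) c := ⟨by linarith, le_refl c⟩
  have hc0 : (0:ℝ) < c := by linarith
  have w1 : (0:ℝ) < 1 - z/c := by rw [sub_pos, div_lt_one hc0]; exact hzc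
  have w2 : (0:ℝ) < z/c := div_pos h0 hc0
  have key := hconv.2 h01 hcc (ne_of_lt hc0) w1 w2 (by ring)
  simp only [smul_eq_mul, mul_zero, zero_add, zero_mul, lodds_zero] at key
  rw [div_mul_cancel₀ _ (ne_of_gt hc0)] at key
  have : lodds z < z / c * lodds c := by linarith
  calc c * lodds z < c * (z / c * lodds c) := by
        apply mul_lt_mul_of_pos_left this hc0
    _ = z * lodds c := by field_simp
def psi (β t : ℝ) : ℝ := t * Real.log t - β/2 * t^2

lemma continuous_psi (β : ℝ) : Continuous (psi β) :=
  Real.continuous_mul_log.sub (continuous_const.mul (continuous_pow 2))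

lemma hasDerivAt_psi (β : ℝ) {t : ℝ} (ht : t ≠ 0) :
    HasDerivAt (psi β) (Real.log t + 1 - β * t) t := by
  have d2 : HasDerivAt (fun t : ℝ => β/2 * t^2) (β * t) t := by
    have := (hasDerivAt_pow 2 t).const_mul (β/2)
    refine this.congr_deriv ?_
    ring
  exact (Real.hasDerivAt_mul_log ht).sub d2

lemma hasDerivAt_psid (β : ℝ) {t : ℝ} (ht : t ≠ 0) :
    HasDerivAt (fun t => Real.log t + 1 - β * t) (t⁻¹ - β) t := by
  have d1 : HasDerivAt (fun t : ℝ => Real.log t + 1) (t⁻¹) t :=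
    (Real.hasDerivAt_log ht).add_const 1
  have d2 : HasDerivAt (fun t : ℝ => β * t) β t := by
    simpa using (hasDerivAt_id t).const_mul β
  exact d1.sub d2

lemma strictConvexOn_psi {β : ℝ} (hβ : 0 < β) :
    StrictConvexOn ℝ (Icc (0:ℝ) β⁻¹) (psi β) := by
  apply strictConvexOn_of_deriv2_pos (convex_Icc _ _) (continuous_psi β).continuousOn
  intro t ht
  rw [interior_Icc] at ht
  have ht0 : 0 < t := ht.1
  have h2 : deriv^[2] (psi β) t = t⁻¹ - β := by
    apply deriv2_eq_of (isOpen_Ioo (a := (0:ℝ)) (b := β⁻¹))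
      (fun x hx => hasDerivAt_psi β (ne_of_gt hx.1))
      (fun x hx => hasDerivAt_psid β (ne_of_gt hx.1)) ht
  rw [h2, sub_pos]
  rw [← one_div, lt_div_iff₀ ht0]
  have := ht.2
  calc β * t < β * β⁻¹ := by exact mul_lt_mul_of_pos_left ht.2 hβ
    _ = 1 := mul_inv_cancel₀ (ne_of_gt hβ)

lemma strictConcaveOn_psi {β : ℝ} (hβ : 0 < β) :
    StrictConcaveOn ℝ (Ici β⁻¹) (psi β) := by
  apply strictConcaveOn_of_deriv2_neg (convex_Ici _) (continuous_psi β).continuousOn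
  intro t ht
  rw [interior_Ici] at ht
  have hβi : (0:ℝ) < β⁻¹ := inv_pos.2 hβ
  have ht0 : 0 < t := lt_trans hβi ht
  have h2 : deriv^[2] (psi β) t = t⁻¹ - β := by
    apply deriv2_eq_of (isOpen_Ioi (a := β⁻¹))
      (fun x hx => hasDerivAt_psi β (ne_of_gt (lt_trans hβi hx)))
      (fun x hx => hasDerivAt_psid β (ne_of_gt (lt_trans hβi hx))) ht
  rw [h2, sub_neg]
  rw [← one_div, div_lt_iff₀ ht0]
  calc (1:ℝ) = β * β⁻¹ := (mul_inv_cancel₀ (ne_of_gt hβ)).symm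
    _ < β * t := by exact mul_lt_mul_of_pos_left ht hβ

lemma xlogq {q : ℝ} (hq : q ≠ 0) (t : ℝ) :
    t * Real.log (q * t) = t * Real.log q + t * Real.log t := by
  rcases eq_or_ne t 0 with rfl | ht
  · simp
  · rw [Real.log_mul hq ht]; ring

lemma fFE_eq (q : ℕ) [NeZero q] (β h : ℝ) (x : Fin q → ℝ) :
    fFE q β h x = (∑ i, x i) * Real.log q + (∑ i, psi β (x i)) - h * x 0 := by
  unfold fFE psi
  have hq : (q:ℝ) ≠ 0 := Nat.cast_ne_zero.2 (NeZero.ne q)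
  have e1 : ∑ i, x i * Real.log (q * x i)
      = ∑ i, (x i * Real.log q + x i * Real.log (x i)) :=
    Finset.sum_congr rfl fun i _ => xlogq hq (x i)
  rw [e1, Finset.sum_add_distrib, ← Finset.sum_mul]
  have e2 : ∑ i, (x i * Real.log (x i) - β/2 * (x i)^2)
      = (∑ i, x i * Real.log (x i)) - β/2 * ∑ i, (x i)^2 := by
    rw [Finset.sum_sub_distrib, Finset.mul_sum]
  rw [e2]; ring

lemma continuous_fFE (q : ℕ) [NeZero q] (β h : ℝ) : Continuous (fFE q β h) := by
  unfold fFE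
  have hq : (0:ℝ) < q := by
    have := Nat.pos_of_ne_zero (NeZero.ne q); exact_mod_cast this
  apply Continuous.sub
  apply Continuous.sub
  · apply continuous_finset_sum
    intro i _
    have key : Continuous (fun t : ℝ => t * Real.log ((q:ℝ) * t)) := by
      have e : (fun t : ℝ => t * Real.log ((q:ℝ) * t))
          = fun t => (q:ℝ)⁻¹ * (((q:ℝ) * t) * Real.log ((q:ℝ) * t)) := by
        funext t; field_simp
      rw [e]
      exact continuous_const.mul
        (Real.continuous_mul_log.comp (continuous_const.mul continuous_id))
    exact key.comp (continuous_apply i)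
  · exact continuous_const.mul (continuous_finset_sum _ fun i _ => (continuous_apply i).pow 2)
  · exact continuous_const.mul (continuous_apply 0)

lemma isClosed_simplexH (q : ℕ) : IsClosed (simplexH q) := by
  have e : simplexH q = {x : Fin q → ℝ | (∑ i, x i) = 1} ∩ ⋂ i, {x | 0 ≤ x i} := by
    ext x; simp [simplexH, Set.mem_iInter]
  rw [e]
  exact (isClosed_eq (continuous_finset_sum _ fun i _ => continuous_apply i)
    continuous_const).inter (isClosed_iInter fun i =>
      isClosed_le continuous_const (continuous_apply i))

lemma isCompact_simplexH (q : ℕ) : IsCompact (simplexH q) := by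
  apply IsCompact.of_isClosed_subset (isCompact_Icc (a := fun _ : Fin q => (0:ℝ))
    (b := fun _ => 1)) (isClosed_simplexH q)
  intro x hx
  constructor
  · intro i; exact hx.2 i
  · intro i
    calc x i ≤ ∑ j, x j := Finset.single_le_sum (fun j _ => hx.2 j) (Finset.mem_univ i)
      _ = 1 := hx.1

lemma nonempty_simplexH (q : ℕ) [NeZero q] : (simplexH q).Nonempty := by
  refine ⟨fun _ => (q:ℝ)⁻¹, ?_, fun i => by positivity⟩
  have hq : (q:ℝ) ≠ 0 := Nat.cast_ne_zero.2 (NeZero.ne q)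
  simp only [Finset.sum_const, Finset.card_univ, Fintype.card_fin, nsmul_eq_mul]
  rw [mul_inv_cancel₀ hq]



def xcan (q : ℕ) [NeZero q] (s : ℝ) : Fin q → ℝ :=
  fun i => if i = 0 then s else (1 - s) / ((q:ℝ) - 1)

def kfun (q : ℕ) (β h : ℝ) (s : ℝ) : ℝ :=
  Real.log q + psi β s + ((q:ℝ) - 1) * psi β ((1 - s)/((q:ℝ) - 1)) - h * s

lemma sum_ite_zero (q : ℕ) [NeZero q] (A B : ℝ) :
    ∑ i : Fin q, (if i = 0 then A else B) = A + ((q:ℝ) - 1) * B := by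
  have h1 : 1 ≤ q := Nat.pos_of_ne_zero (NeZero.ne q)
  rw [← Finset.sum_erase_add Finset.univ _ (Finset.mem_univ (0 : Fin q))]
  rw [if_pos rfl]
  have e : ∑ i ∈ Finset.univ.erase (0 : Fin q), (if i = 0 then A else B)
      = ∑ i ∈ Finset.univ.erase (0 : Fin q), B :=
    Finset.sum_congr rfl fun i hi => if_neg (Finset.ne_of_mem_erase hi)
  rw [e, Finset.sum_const, Finset.card_erase_of_mem (Finset.mem_univ _), Finset.card_univ,
    Fintype.card_fin, nsmul_eq_mul]
  have : ((q - 1 : ℕ) : ℝ) = (q:ℝ) - 1 := by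
    rw [Nat.cast_sub h1]; norm_num
  rw [this]; ring

lemma xcan_mem (q : ℕ) [NeZero q] (hq3 : 3 ≤ q) {s : ℝ} (hs : s ∈ Icc (0:ℝ) 1) :
    xcan q s ∈ simplexH q := by
  have hQ3 : (3:ℝ) ≤ (q:ℝ) := by exact_mod_cast hq3
  have hQ1 : (0:ℝ) < (q:ℝ) - 1 := by linarith
  constructor
  · unfold xcan
    rw [sum_ite_zero q s ((1 - s)/((q:ℝ) - 1))]
    field_simp; ring
  · intro i
    unfold xcan
    rcases eq_or_ne i 0 with rfl | hi
    · simpa using hs.1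
    · rw [if_neg hi]
      have : 0 ≤ 1 - s := by linarith [hs.2]
      positivity

lemma fFE_xcan (q : ℕ) [NeZero q] (hq3 : 3 ≤ q) (β h : ℝ) (s : ℝ) :
    fFE q β h (xcan q s) = kfun q β h s := by
  have hQ3 : (3:ℝ) ≤ (q:ℝ) := by exact_mod_cast hq3
  have hQ1 : (0:ℝ) < (q:ℝ) - 1 := by linarith
  rw [fFE_eq]
  unfold xcan kfun
  have e1 : ∑ i : Fin q, (if i = 0 then s else (1 - s)/((q:ℝ) - 1))
      = s + ((q:ℝ) - 1) * ((1 - s)/((q:ℝ) - 1)) := sum_ite_zero q _ _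
  have e2 : ∑ i : Fin q, psi β (if i = 0 then s else (1 - s)/((q:ℝ) - 1))
      = psi β s + ((q:ℝ) - 1) * psi β ((1 - s)/((q:ℝ) - 1)) := by
    have : ∀ i : Fin q, psi β (if i = 0 then s else (1 - s)/((q:ℝ) - 1))
        = if i = 0 then psi β s else psi β ((1 - s)/((q:ℝ) - 1)) := fun i => apply_ite _ _ _ _
    rw [Finset.sum_congr rfl fun i _ => this i, sum_ite_zero q _ _]
  rw [e1, e2]
  have e3 : s + ((q:ℝ) - 1) * ((1 - s)/((q:ℝ) - 1)) = 1 := by field_simp; ring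
  rw [e3, if_pos rfl]
  ring

lemma continuous_kfun (q : ℕ) (β h : ℝ) : Continuous (kfun q β h) := by
  unfold kfun
  apply Continuous.sub
  apply Continuous.add
  apply Continuous.add continuous_const
  · exact (continuous_psi β)
  · apply Continuous.mul continuous_const
    exact (continuous_psi β).comp ((continuous_const.sub continuous_id).div_const _)
  · exact continuous_const.mul continuous_id



lemma sum_update2 {q : ℕ} (g : ℝ → ℝ) (x : Fin q → ℝ) {i j : Fin q} (hij : i ≠ j) (a b : ℝ) :
    ∑ k, g (Function.update (Function.update x i a) j b k)
      = (∑ k, g (x k)) - g (x i) - g (x j) + g a + g b := by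
  have e1 : (fun k => g (Function.update (Function.update x i a) j b k))
      = Function.update (Function.update (fun k => g (x k)) i (g a)) j (g b) := by
    funext k
    rcases eq_or_ne k j with rfl | hkj
    · simp
    · rcases eq_or_ne k i with rfl | hki
      · simp [Function.update_of_ne hkj, Function.update_of_ne hij]
      · simp [Function.update_of_ne hkj, Function.update_of_ne hki]
  rw [show (fun k => g (Function.update (Function.update x i a) j b k)) = fun k =>
    (Function.update (Function.update (fun k => g (x k)) i (g a)) j (g b)) k from e1]
  rw [Finset.sum_update_of_mem (Finset.mem_univ j)]
  rw [Finset.sum_update_of_mem (by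
    rw [Finset.mem_sdiff]; exact ⟨Finset.mem_univ i, by simp [hij]⟩)]
  have e2 : ∑ k, g (x k) = (∑ k ∈ Finset.univ \ {j}, g (x k)) + g (x j) := by
    rw [Finset.sum_eq_sum_sdiff_singleton_add (Finset.mem_univ j)]
  have e3 : ∑ k ∈ Finset.univ \ {j}, g (x k)
      = (∑ k ∈ (Finset.univ \ {j}) \ {i}, g (x k)) + g (x i) := by
    apply Finset.sum_eq_sum_sdiff_singleton_add
    rw [Finset.mem_sdiff]; exact ⟨Finset.mem_univ i, by simp [hij]⟩
  linarith

lemma update2_mem {q : ℕ} {x : Fin q → ℝ} (hx : x ∈ simplexH q) {i j : Fin q} (hij : i ≠ j)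
    {a b : ℝ} (ha : 0 ≤ a) (hb : 0 ≤ b) (hab : a + b = x i + x j) :
    Function.update (Function.update x i a) j b ∈ simplexH q := by
  constructor
  · have := sum_update2 (fun t => t) x hij a b
    rw [this, hx.1]; linarith
  · intro k
    rcases eq_or_ne k j with rfl | hkj
    · simpa using hb
    · rcases eq_or_ne k i with rfl | hki
      · rw [Function.update_of_ne hkj, Function.update_self]; exact ha
      · rw [Function.update_of_ne hkj, Function.update_of_ne hki]; exact hx.2 k

/-- At a global minimizer, the 0-th coordinate is maximal (uses h > 0, swap argument). -/
lemma min_coord_zero_max {q : ℕ} [NeZero q] {β h : ℝ} (hh : 0 < h)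
    {x : Fin q → ℝ} (hxH : x ∈ simplexH q)
    (hmin : ∀ y ∈ simplexH q, fFE q β h x ≤ fFE q β h y) (i : Fin q) : x i ≤ x 0 := by
  by_contra hlt
  push_neg at hlt
  set e := Equiv.swap (0 : Fin q) i with he
  set y := fun k => x (e k) with hy
  have hyH : y ∈ simplexH q := by
    constructor
    · rw [hy]; rw [Equiv.sum_comp e x]; exact hxH.1
    · intro k; exact hxH.2 _
  have hy0 : y 0 = x i := by rw [hy]; simp [he, Equiv.swap_apply_left]
  have hfy : fFE q β h y = fFE q β h x + h * x 0 - h * x i := by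
    unfold fFE
    have s1 : ∑ k, y k * Real.log (q * y k) = ∑ k, x k * Real.log (q * x k) :=
      Equiv.sum_comp e (fun t => x t * Real.log (q * x t))
    have s2 : ∑ k, (y k)^2 = ∑ k, (x k)^2 := Equiv.sum_comp e (fun t => (x t)^2)
    rw [s1, s2, hy0]; ring
  have := hmin y hyH
  rw [hfy] at this
  nlinarith

/-- At a global minimizer, non-zero coordinates are at most 1/β (spread argument). -/
lemma min_coord_le_invbeta {q : ℕ} [NeZero q] {β h : ℝ} (hβ : 0 < β) (hh : 0 < h)
    {x : Fin q → ℝ} (hxH : x ∈ simplexH q)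
    (hmin : ∀ y ∈ simplexH q, fFE q β h x ≤ fFE q β h y) {i : Fin q} (hi : i ≠ 0) :
    x i ≤ β⁻¹ := by
  by_contra hlt
  push_neg at hlt
  have hx0 : x i ≤ x 0 := min_coord_zero_max hh hxH hmin i
  set δ := x i - β⁻¹ with hδ
  have hδ0 : 0 < δ := by rw [hδ]; linarith
  set y := Function.update (Function.update x i β⁻¹) 0 (x 0 + δ) with hydef
  have hβi : (0:ℝ) < β⁻¹ := inv_pos.2 hβ
  have hyH : y ∈ simplexH q := update2_mem hxH hi (le_of_lt hβi)
    (by linarith [hxH.2 0]) (by rw [hδ]; ring)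
  have hy0 : y 0 = x 0 + δ := by rw [hydef]; simp
  have hsum : ∑ k, psi β (y k) = (∑ k, psi β (x k)) - psi β (x i) - psi β (x 0)
      + psi β β⁻¹ + psi β (x 0 + δ) := sum_update2 (psi β) x hi β⁻¹ (x 0 + δ)
  have hspread : psi β β⁻¹ + psi β (x 0 + δ) < psi β (x i) + psi β (x 0) := by
    apply two_point_spread (strictConcaveOn_psi hβ) (le_refl β⁻¹)
      (by rw [Set.mem_Ici]; linarith : x 0 + δ ∈ Set.Ici β⁻¹) hlt hx0 (by linarith) (by rw [hδ]; ring)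
  have hfle := hmin y hyH
  rw [fFE_eq q β h x, fFE_eq q β h y, hxH.1, hyH.1, hsum, hy0] at hfle
  nlinarith

/-- At a global minimizer, all non-zero coordinates are equal (midpoint argument). -/
lemma min_coords_eq {q : ℕ} [NeZero q] {β h : ℝ} (hβ : 0 < β) (hh : 0 < h)
    {x : Fin q → ℝ} (hxH : x ∈ simplexH q)
    (hmin : ∀ y ∈ simplexH q, fFE q β h x ≤ fFE q β h y) {i j : Fin q}
    (hi : i ≠ 0) (hj : j ≠ 0) : x i = x j := by
  by_contra hne
  have hij : i ≠ j := by rintro rfl; exact hne rfl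
  set m := (x i + x j)/2 with hm
  have hm0 : 0 ≤ m := by rw [hm]; linarith [hxH.2 i, hxH.2 j]
  set y := Function.update (Function.update x i m) j m with hydef
  have hyH : y ∈ simplexH q := update2_mem hxH hij hm0 hm0 (by rw [hm]; ring)
  have hy0 : y 0 = x 0 := by
    rw [hydef, Function.update_of_ne (Ne.symm hj), Function.update_of_ne (Ne.symm hi)]
  have hsum : ∑ k, psi β (y k) = (∑ k, psi β (x k)) - psi β (x i) - psi β (x j)
      + psi β m + psi β m := sum_update2 (psi β) x hij m m
  have hconv : psi β m + psi β m < psi β (x i) + psi β (x j) := by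
    apply two_point_convex (strictConvexOn_psi hβ)
      ⟨hxH.2 i, min_coord_le_invbeta hβ hh hxH hmin hi⟩
      ⟨hxH.2 j, min_coord_le_invbeta hβ hh hxH hmin hj⟩ hne
  have hfle := hmin y hyH
  rw [fFE_eq q β h x, fFE_eq q β h y, hxH.1, hyH.1, hsum, hy0] at hfle
  nlinarith



def kd (q : ℕ) (β h : ℝ) (s : ℝ) : ℝ :=
  Real.log s - Real.log ((1 - s)/((q:ℝ) - 1)) - β * (s - (1 - s)/((q:ℝ) - 1)) - h

lemma hasDerivAt_inner (q : ℕ) (s : ℝ) :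
    HasDerivAt (fun u : ℝ => (1 - u)/((q:ℝ) - 1)) (-(1/((q:ℝ) - 1))) s := by
  have h1 : HasDerivAt (fun u : ℝ => 1 - u) (-1) s := (hasDerivAt_id s).const_sub 1
  have := h1.div_const ((q:ℝ) - 1)
  refine this.congr_deriv ?_
  ring

lemma hasDerivAt_kfun (q : ℕ) (hq3 : 3 ≤ q) (β h : ℝ) {s : ℝ} (hs : s ∈ Ioo (0:ℝ) 1) :
    HasDerivAt (kfun q β h) (kd q β h s) s := by
  have hQ3 : (3:ℝ) ≤ (q:ℝ) := by exact_mod_cast hq3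
  have hQ1 : (0:ℝ) < (q:ℝ) - 1 := by linarith
  have ht : 0 < (1 - s)/((q:ℝ) - 1) := div_pos (by linarith [hs.2]) hQ1
  have d1 : HasDerivAt (fun u : ℝ => psi β u) (Real.log s + 1 - β * s) s :=
    hasDerivAt_psi β (ne_of_gt hs.1)
  have d2 : HasDerivAt (fun u : ℝ => psi β ((1 - u)/((q:ℝ) - 1)))
      ((Real.log ((1 - s)/((q:ℝ) - 1)) + 1 - β * ((1 - s)/((q:ℝ) - 1))) * (-(1/((q:ℝ) - 1)))) s :=
    by have := (hasDerivAt_psi β (ne_of_gt ht)).comp s (hasDerivAt_inner q s); exact this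
  have d4 : HasDerivAt (fun u : ℝ => h * u) h s := by
    simpa using (hasDerivAt_id s).const_mul h
  have d5 := ((d1.const_add (Real.log q)).add (d2.const_mul ((q:ℝ) - 1))).sub d4
  have e : kfun q β h = fun u : ℝ =>
      Real.log q + psi β u + ((q:ℝ) - 1) * psi β ((1 - u)/((q:ℝ) - 1)) - h * u := rfl
  rw [e]
  refine d5.congr_deriv ?_
  unfold kd
  have n1 : s ≠ 0 := ne_of_gt hs.1
  have n2 : (1:ℝ) - s ≠ 0 := ne_of_gt (by linarith [hs.2])
  have n3 : (q:ℝ) - 1 ≠ 0 := ne_of_gt hQ1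
  field_simp
  ring

lemma hasDerivAt_kd (q : ℕ) (hq3 : 3 ≤ q) (β h : ℝ) {s : ℝ} (hs : s ∈ Ioo (0:ℝ) 1) :
    HasDerivAt (kd q β h) (1/(s * (1 - s)) - β * (q:ℝ)/((q:ℝ) - 1)) s := by
  have hQ3 : (3:ℝ) ≤ (q:ℝ) := by exact_mod_cast hq3
  have hQ1 : (0:ℝ) < (q:ℝ) - 1 := by linarith
  have hs0 : (0:ℝ) < s := hs.1
  have hs1 : s < 1 := hs.2
  have ht : 0 < (1 - s)/((q:ℝ) - 1) := div_pos (by linarith) hQ1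
  have dlog1 : HasDerivAt Real.log s⁻¹ s := Real.hasDerivAt_log (ne_of_gt hs0)
  have dlog2 : HasDerivAt (fun u : ℝ => Real.log ((1 - u)/((q:ℝ) - 1)))
      (((1 - s)/((q:ℝ) - 1))⁻¹ * (-(1/((q:ℝ) - 1)))) s :=
    by have := (Real.hasDerivAt_log (ne_of_gt ht)).comp s (hasDerivAt_inner q s); exact this
  have dlin : HasDerivAt (fun u : ℝ => β * (u - (1 - u)/((q:ℝ) - 1)))
      (β * (1 - -(1/((q:ℝ) - 1)))) s :=
    ((hasDerivAt_id s).sub (hasDerivAt_inner q s)).const_mul β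
  have d5 := ((dlog1.sub dlog2).sub dlin).sub_const h
  have e : kd q β h = fun u : ℝ => Real.log u - Real.log ((1 - u)/((q:ℝ) - 1))
      - β * (u - (1 - u)/((q:ℝ) - 1)) - h := rfl
  rw [e]
  refine d5.congr_deriv ?_
  have n1 : s ≠ 0 := ne_of_gt hs0
  have n2 : (1:ℝ) - s ≠ 0 := ne_of_gt (by linarith)
  have n3 : (q:ℝ) - 1 ≠ 0 := ne_of_gt hQ1
  have n4 : s * (1 - s) ≠ 0 := mul_ne_zero n1 n2
  field_simp
  ring


/-- h₀ = log(q-1) - 2(q-2)/q. -/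
def h0 (q : ℕ) : ℝ := Real.log ((q : ℝ) - 1) - 2 * ((q : ℝ) - 2) / q

/-- The critical line h_T. -/
def onCriticalLine (q : ℕ) (β h : ℝ) : Prop :=
  0 ≤ h ∧ h < h0 q ∧ h = Real.log ((q : ℝ) - 1) - β * ((q : ℝ) - 2) / (2 * ((q : ℝ) - 1))

/-- The parametrized point x_z. -/
def xpar (q : ℕ) [NeZero q] (z : ℝ) : Fin q → ℝ :=
  fun i => if i = 0 then (1 + z) / 2 else (1 - z) / (2 * ((q : ℝ) - 1))

def betaZ (q : ℕ) (z : ℝ) : ℝ :=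
  2 * ((q : ℝ) - 1) / (z * q) * Real.log ((1 + z) / (1 - z))

def hZ (q : ℕ) (z : ℝ) : ℝ :=
  Real.log ((q : ℝ) - 1) - ((q : ℝ) - 2) / (2 * ((q : ℝ) - 1)) * betaZ q z



section Params
variable {q : ℕ} {z : ℝ}

lemma basic_z (hq3 : 3 ≤ q) (hz0 : 0 < z) (hzc : z < ((q:ℝ) - 2)/q) : z < 1 := by
  have hQ3 : (3:ℝ) ≤ (q:ℝ) := by exact_mod_cast hq3
  have hQ0 : (0:ℝ) < (q:ℝ) := by linarith
  have : ((q:ℝ) - 2)/q < 1 := by rw [div_lt_one hQ0]; linarith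
  linarith

lemma log_ratio (hz0 : 0 < z) (hz1 : z < 1) :
    Real.log ((1 + z)/(1 - z)) = lodds z := by
  unfold lodds
  rw [Real.log_div (by linarith) (by linarith)]

lemma betaZ_eq (hq3 : 3 ≤ q) (hz0 : 0 < z) (hzc : z < ((q:ℝ) - 2)/q) :
    betaZ q z = 2 * ((q:ℝ) - 1) * lodds z / (z * q) := by
  unfold betaZ
  rw [log_ratio hz0 (basic_z hq3 hz0 hzc)]
  ring

lemma betaZ_pos (hq3 : 3 ≤ q) (hz0 : 0 < z) (hzc : z < ((q:ℝ) - 2)/q) :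
    0 < betaZ q z := by
  have hQ3 : (3:ℝ) ≤ (q:ℝ) := by exact_mod_cast hq3
  have hz1 := basic_z hq3 hz0 hzc
  rw [betaZ_eq hq3 hz0 hzc]
  have := lodds_pos hz0 hz1
  have hQ1 : (0:ℝ) < (q:ℝ) - 1 := by linarith
  have hQ0 : (0:ℝ) < (q:ℝ) := by linarith
  positivity

/-- β_z > β₀ = 4(q-1)/q. -/
lemma betaZ_gt (hq3 : 3 ≤ q) (hz0 : 0 < z) (hzc : z < ((q:ℝ) - 2)/q) :
    4 * ((q:ℝ) - 1)/q < betaZ q z := by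
  have hQ3 : (3:ℝ) ≤ (q:ℝ) := by exact_mod_cast hq3
  have hz1 := basic_z hq3 hz0 hzc
  have hQ1 : (0:ℝ) < (q:ℝ) - 1 := by linarith
  have hQ0 : (0:ℝ) < (q:ℝ) := by linarith
  have hL := two_mul_lt_lodds hz0 hz1
  rw [betaZ_eq hq3 hz0 hzc, ← sub_pos]
  have e : 2 * ((q:ℝ) - 1) * lodds z / (z * q) - 4 * ((q:ℝ) - 1)/q
      = (2 * ((q:ℝ) - 1)/(z * q)) * (lodds z - 2 * z) := by
    field_simp
    ring
  rw [e]
  have h1 : 0 < 2 * ((q:ℝ) - 1)/(z * q) := by positivity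
  have h2 : 0 < lodds z - 2 * z := by linarith
  positivity

lemma lodds_c (hq3 : 3 ≤ q) :
    lodds (((q:ℝ) - 2)/q) = Real.log ((q:ℝ) - 1) := by
  have hQ3 : (3:ℝ) ≤ (q:ℝ) := by exact_mod_cast hq3
  have hQ1 : (0:ℝ) < (q:ℝ) - 1 := by linarith
  have hQ0 : (0:ℝ) < (q:ℝ) := by linarith
  unfold lodds
  rw [show (1:ℝ) + ((q:ℝ) - 2)/q = (2 * ((q:ℝ) - 1))/q by field_simp; ring,
      show (1:ℝ) - ((q:ℝ) - 2)/q = 2/q by field_simp; ring]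
  rw [Real.log_div (by positivity) (ne_of_gt hQ0),
      Real.log_div (by norm_num) (ne_of_gt hQ0),
      Real.log_mul (by norm_num) (ne_of_gt hQ1)]
  ring

lemma hZ_pos (hq3 : 3 ≤ q) (hz0 : 0 < z) (hzc : z < ((q:ℝ) - 2)/q) :
    0 < hZ q z := by
  have hQ3 : (3:ℝ) ≤ (q:ℝ) := by exact_mod_cast hq3
  have hz1 := basic_z hq3 hz0 hzc
  have hQ1 : (0:ℝ) < (q:ℝ) - 1 := by linarith
  have hQ2 : (0:ℝ) < (q:ℝ) - 2 := by linarith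
  have hQ0 : (0:ℝ) < (q:ℝ) := by linarith
  have hc1 : ((q:ℝ) - 2)/q < 1 := by rw [div_lt_one hQ0]; linarith
  have key := lodds_convex_ineq hz0 hzc hc1
  rw [lodds_c hq3] at key
  -- key : (q-2)/q * lodds z < z * log (q-1)
  unfold hZ
  rw [betaZ_eq hq3 hz0 hzc, sub_pos]
  have e : ((q:ℝ) - 2)/(2 * ((q:ℝ) - 1)) * (2 * ((q:ℝ) - 1) * lodds z / (z * q))
      = (((q:ℝ) - 2)/q * lodds z) / z := by
    field_simp
  rw [e, div_lt_iff₀ hz0]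
  calc ((q:ℝ) - 2)/q * lodds z < z * Real.log ((q:ℝ) - 1) := key
    _ = Real.log ((q:ℝ) - 1) * z := by ring

lemma hZ_lt_h0 (hq3 : 3 ≤ q) (hz0 : 0 < z) (hzc : z < ((q:ℝ) - 2)/q) :
    hZ q z < h0 q := by
  have hQ3 : (3:ℝ) ≤ (q:ℝ) := by exact_mod_cast hq3
  have hQ1 : (0:ℝ) < (q:ℝ) - 1 := by linarith
  have hQ2 : (0:ℝ) < (q:ℝ) - 2 := by linarith
  have hQ0 : (0:ℝ) < (q:ℝ) := by linarith
  have hb := betaZ_gt hq3 hz0 hzc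
  unfold hZ h0
  have e : 2 * ((q:ℝ) - 2)/q = ((q:ℝ) - 2)/(2 * ((q:ℝ) - 1)) * (4 * ((q:ℝ) - 1)/q) := by
    field_simp; ring
  have h1 : ((q:ℝ) - 2)/(2 * ((q:ℝ) - 1)) * (4 * ((q:ℝ) - 1)/q)
      < ((q:ℝ) - 2)/(2 * ((q:ℝ) - 1)) * betaZ q z :=
    mul_lt_mul_of_pos_left hb (by positivity)
  linarith [h1, e.symm.le]

end Params

set_option maxHeartbeats 2000000 in
theorem oneD (q : ℕ) (hq3 : 3 ≤ q) {z : ℝ} (hz0 : 0 < z) (hzc : z < ((q:ℝ) - 2)/q) :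
    kfun q (betaZ q z) (hZ q z) ((1+z)/2) = kfun q (betaZ q z) (hZ q z) ((1-z)/2) ∧
    ∀ s ∈ Icc (0:ℝ) 1, s ≠ (1+z)/2 → s ≠ (1-z)/2 →
      kfun q (betaZ q z) (hZ q z) ((1-z)/2) < kfun q (betaZ q z) (hZ q z) s := by
  have hQ3 : (3:ℝ) ≤ (q:ℝ) := by exact_mod_cast hq3
  have hQ1 : (0:ℝ) < (q:ℝ) - 1 := by linarith
  have hQ2 : (0:ℝ) < (q:ℝ) - 2 := by linarith
  have hQ0 : (0:ℝ) < (q:ℝ) := by linarith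
  have hz1 : z < 1 := basic_z hq3 hz0 hzc
  have hL : 0 < lodds z := lodds_pos hz0 hz1
  have hβpos : 0 < betaZ q z := betaZ_pos hq3 hz0 hzc
  set β := betaZ q z with hβdef
  set h := hZ q z with hhdef
  have hβform : β = 2 * ((q:ℝ) - 1) * lodds z / (z * (q:ℝ)) := betaZ_eq hq3 hz0 hzc
  have hhform : h = Real.log ((q:ℝ) - 1) - ((q:ℝ) - 2)/(2*((q:ℝ) - 1)) * β := rfl
  clear_value β h
  have nz : z ≠ 0 := ne_of_gt hz0
  have nQ : (q:ℝ) ≠ 0 := ne_of_gt hQ0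
  have nQ1 : (q:ℝ) - 1 ≠ 0 := ne_of_gt hQ1
  have nL : lodds z ≠ 0 := ne_of_gt hL
  have hs2pos : (0:ℝ) < (1-z)/2 := by linarith
  have hs1pos : (0:ℝ) < (1+z)/2 := by linarith
  have hs1lt : (1+z)/2 < 1 := by linarith
  have hs2half : (1-z)/2 < 1/2 := by linarith
  have hs1half : (1:ℝ)/2 < (1+z)/2 := by linarith
  -- log identities
  have l2 : Real.log ((1+z)/2) - Real.log ((1-z)/2) = lodds z := by
    unfold lodds
    rw [Real.log_div (by linarith : (1:ℝ)+z ≠ 0) (two_ne_zero),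
        Real.log_div (by linarith : (1:ℝ)-z ≠ 0) (two_ne_zero)]
    ring
  have l1 : Real.log ((1 - (1+z)/2)/((q:ℝ) - 1)) = Real.log ((1-z)/2) - Real.log ((q:ℝ) - 1) := by
    rw [show (1:ℝ) - (1+z)/2 = (1-z)/2 by ring]
    exact Real.log_div (ne_of_gt hs2pos) nQ1
  have l1' : Real.log ((1 - (1-z)/2)/((q:ℝ) - 1)) = Real.log ((1+z)/2) - Real.log ((q:ℝ) - 1) := by
    rw [show (1:ℝ) - (1-z)/2 = (1+z)/2 by ring]
    exact Real.log_div (ne_of_gt hs1pos) nQ1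
  -- both points are critical
  have hkd1 : kd q β h ((1+z)/2) = 0 := by
    unfold kd
    rw [l1, hhform, hβform, ← l2]
    field_simp
    ring
  have hkd2 : kd q β h ((1-z)/2) = 0 := by
    unfold kd
    rw [l1', hhform, hβform, ← l2]
    field_simp
    ring
  -- equal values
  have hkval : kfun q β h ((1+z)/2) = kfun q β h ((1-z)/2) := by
    unfold kfun psi
    rw [l1, l1', hhform]
    field_simp
    ring
  -- the inflection points
  have hβq : 0 < β * (q:ℝ) := mul_pos hβpos hQ0
  set r : ℝ := ((q:ℝ) - 1)/(β * (q:ℝ)) with hrdef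
  have hr0 : 0 < r := div_pos hQ1 hβq
  have hr4 : 4 * r < 1 := by
    rw [hrdef, show (4:ℝ) * (((q:ℝ) - 1)/(β * q)) = (4*((q:ℝ) - 1))/(β * q) by ring,
      div_lt_one hβq]
    have hb := betaZ_gt hq3 hz0 hzc
    rw [div_lt_iff₀ hQ0] at hb
    rw [← hβdef] at hb
    linarith
  have h1m4r : (0:ℝ) < 1 - 4*r := by linarith
  set d : ℝ := Real.sqrt (1 - 4*r) with hddef
  have hd2 : d^2 = 1 - 4*r := Real.sq_sqrt (le_of_lt h1m4r)
  have hd0 : 0 < d := Real.sqrt_pos.2 h1m4r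
  clear_value r d
  have hd1 : d < 1 := by
    have h9 := Real.sqrt_lt_sqrt (le_of_lt h1m4r) (show 1 - 4*r < 1 by linarith)
    rw [Real.sqrt_one] at h9
    rw [hddef]
    exact h9
  set sm : ℝ := (1-d)/2 with hsmdef
  set sp : ℝ := (1+d)/2 with hspdef
  clear_value sm
  clear_value sp
  have hsm0 : 0 < sm := by rw [hsmdef]; linarith
  have hsmh : sm < 1/2 := by rw [hsmdef]; linarith
  have hsph : (1:ℝ)/2 < sp := by rw [hspdef]; linarith
  have hsp1 : sp < 1 := by rw [hspdef]; linarith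
  have hsmsp : sm < sp := lt_trans hsmh hsph
  have hsmr : sm * (1-sm) = r := by
    rw [hsmdef]; linear_combination (-1/4 : ℝ) * hd2
  have hspr : sp * (1-sp) = r := by
    rw [hspdef]; linear_combination (-1/4 : ℝ) * hd2
  have hrxm : ∀ x : ℝ, r - x*(1-x) = (x - sm)*(x - sp) := by
    intro x
    rw [hsmdef, hspdef]
    linear_combination (1/4 : ℝ) * hd2
  -- quadratic bound at the two critical points
  have hzr : ((1+z)/2) * (1 - (1+z)/2) < r := by
    have hI2 := lodds_lt hz0 hz1
    have h1mz2 : (0:ℝ) < 1 - z^2 := by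
      nlinarith [mul_pos (show (0:ℝ) < 1-z by linarith) (show (0:ℝ) < 1+z by linarith)]
    have key : (1 - z^2) * lodds z < 2*z := by
      have h5 : (1 - z^2) * lodds z < (1 - z^2) * (2*z/(1 - z^2)) :=
        mul_lt_mul_of_pos_left hI2 h1mz2
      have h6 : (1 - z^2) * (2*z/(1 - z^2)) = 2*z := by field_simp
      linarith
    have hr_eq : r = z/(2*lodds z) := by
      rw [hrdef, hβform]
      field_simp
    rw [show ((1+z)/2) * (1 - (1+z)/2) = (1 - z^2)/4 by ring, hr_eq,
      div_lt_div_iff₀ (by norm_num : (0:ℝ) < 4) (by positivity)]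
    have key2 : (1 - z^2)*(2*lodds z) = 2*((1 - z^2)*lodds z) := by ring
    rw [key2]
    linarith
  have hs2sm : (1-z)/2 < sm := by
    by_contra hcon
    push_neg at hcon
    have h7 : sm * (1-sm) ≤ ((1-z)/2) * (1 - (1-z)/2) := by
      have e7 : ((1-z)/2) * (1 - (1-z)/2) - sm * (1-sm)
          = ((1-z)/2 - sm) * (1 - sm - (1-z)/2) := by ring
      have h8 := mul_nonneg (sub_nonneg.2 hcon) (show (0:ℝ) ≤ 1 - sm - (1-z)/2 by linarith)
      linarith [e7, h8]
    rw [hsmr] at h7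
    have e9 : ((1+z)/2) * (1 - (1+z)/2) = ((1-z)/2) * (1 - (1-z)/2) := by ring
    linarith [hzr]
  have hsps1 : sp < (1+z)/2 := by
    by_contra hcon
    push_neg at hcon
    have h7 : sp * (1-sp) ≤ ((1+z)/2) * (1 - (1+z)/2) := by
      have e7 : ((1+z)/2) * (1 - (1+z)/2) - sp * (1-sp)
          = (sp - (1+z)/2) * (sp + (1+z)/2 - 1) := by ring
      have h8 := mul_nonneg (sub_nonneg.2 hcon) (show (0:ℝ) ≤ sp + (1+z)/2 - 1 by linarith)
      linarith [e7, h8]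
    rw [hspr] at h7
    linarith [hzr]
  -- form of the second derivative
  have kdd_form : ∀ x ∈ Ioo (0:ℝ) 1, 1/(x*(1-x)) - β*(q:ℝ)/((q:ℝ) - 1)
      = (β*(q:ℝ)*(r - x*(1-x)))/(((q:ℝ) - 1)*(x*(1-x))) := by
    intro x hx
    have n1 : x ≠ 0 := ne_of_gt hx.1
    have n2 : (1:ℝ) - x ≠ 0 := ne_of_gt (by linarith [hx.2])
    rw [hrdef]
    field_simp
  -- monotonicity of kd on the two outer intervals
  have P1 : StrictMonoOn (kd q β h) (Ioc (0:ℝ) sm) := by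
    apply strictMonoOn_of_deriv_pos (convex_Ioc 0 sm)
    · intro x hx
      exact (hasDerivAt_kd q hq3 β h
        ⟨hx.1, by linarith [hx.2, hsmh]⟩).continuousAt.continuousWithinAt
    · intro x hx
      rw [interior_Ioc] at hx
      have hx01 : x ∈ Ioo (0:ℝ) 1 := ⟨hx.1, by linarith [hx.2, hsmh]⟩
      rw [(hasDerivAt_kd q hq3 β h hx01).deriv, kdd_form x hx01]
      apply div_pos
      · apply mul_pos hβq
        rw [hrxm x]
        have w1 : x - sm < 0 := by linarith [hx.2]
        have w2 : x - sp < 0 := by linarith [hx.2, hsmsp]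
        exact mul_pos_of_neg_of_neg w1 w2
      · exact mul_pos hQ1 (mul_pos hx01.1 (by linarith [hx01.2]))
  have P2 : StrictMonoOn (kd q β h) (Ico sp 1) := by
    apply strictMonoOn_of_deriv_pos (convex_Ico sp 1)
    · intro x hx
      exact (hasDerivAt_kd q hq3 β h
        ⟨by linarith [hx.1, hsph], hx.2⟩).continuousAt.continuousWithinAt
    · intro x hx
      rw [interior_Ico] at hx
      have hx01 : x ∈ Ioo (0:ℝ) 1 := ⟨by linarith [hx.1, hsph], hx.2⟩
      rw [(hasDerivAt_kd q hq3 β h hx01).deriv, kdd_form x hx01]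
      apply div_pos
      · apply mul_pos hβq
        rw [hrxm x]
        have w1 : 0 < x - sm := by linarith [hx.1, hsmsp]
        have w2 : 0 < x - sp := by linarith [hx.1]
        exact mul_pos w1 w2
      · exact mul_pos hQ1 (mul_pos hx01.1 (by linarith [hx01.2]))
  have hkc : Continuous (kfun q β h) := continuous_kfun q β h
  -- monotonicity of kfun on the four outer intervals
  have A1 : StrictAntiOn (kfun q β h) (Icc (0:ℝ) ((1-z)/2)) := by
    apply strictAntiOn_of_deriv_neg (convex_Icc _ _) hkc.continuousOn
    intro x hx
    rw [interior_Icc] at hx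
    have hx01 : x ∈ Ioo (0:ℝ) 1 := ⟨hx.1, by linarith [hx.2]⟩
    rw [(hasDerivAt_kfun q hq3 β h hx01).deriv]
    have := P1 (show x ∈ Ioc (0:ℝ) sm from ⟨hx.1, le_of_lt (lt_trans hx.2 hs2sm)⟩)
      (show (1-z)/2 ∈ Ioc (0:ℝ) sm from ⟨hs2pos, le_of_lt hs2sm⟩) hx.2
    rw [hkd2] at this
    exact this
  have A2 : StrictMonoOn (kfun q β h) (Icc ((1-z)/2) sm) := by
    apply strictMonoOn_of_deriv_pos (convex_Icc _ _) hkc.continuousOn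
    intro x hx
    rw [interior_Icc] at hx
    have hx01 : x ∈ Ioo (0:ℝ) 1 := ⟨lt_trans hs2pos hx.1, by linarith [hx.2, hsmh]⟩
    rw [(hasDerivAt_kfun q hq3 β h hx01).deriv]
    have := P1 (show (1-z)/2 ∈ Ioc (0:ℝ) sm from ⟨hs2pos, le_of_lt hs2sm⟩)
      (show x ∈ Ioc (0:ℝ) sm from ⟨lt_trans hs2pos hx.1, le_of_lt hx.2⟩) hx.1
    rw [hkd2] at this
    exact this
  have A3 : StrictConcaveOn ℝ (Icc sm sp) (kfun q β h) := by
    apply strictConcaveOn_of_deriv2_neg (convex_Icc _ _) hkc.continuousOn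
    intro x hx
    rw [interior_Icc] at hx
    have hx01 : x ∈ Ioo (0:ℝ) 1 := ⟨lt_trans hsm0 hx.1, by linarith [hx.2, hsp1]⟩
    have e := deriv2_eq_of (isOpen_Ioo (a := (0:ℝ)) (b := 1))
      (fun y hy => hasDerivAt_kfun q hq3 β h hy)
      (fun y hy => hasDerivAt_kd q hq3 β h hy) hx01
    rw [e, kdd_form x hx01]
    apply div_neg_of_neg_of_pos
    · apply mul_neg_of_pos_of_neg hβq
      rw [hrxm x]
      have w1 : 0 < x - sm := by linarith [hx.1]
      have w2 : x - sp < 0 := by linarith [hx.2]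
      exact mul_neg_of_pos_of_neg w1 w2
    · exact mul_pos hQ1 (mul_pos hx01.1 (by linarith [hx01.2]))
  have A4 : StrictAntiOn (kfun q β h) (Icc sp ((1+z)/2)) := by
    apply strictAntiOn_of_deriv_neg (convex_Icc _ _) hkc.continuousOn
    intro x hx
    rw [interior_Icc] at hx
    have hx01 : x ∈ Ioo (0:ℝ) 1 := ⟨by linarith [hx.1, hsph], by linarith [hx.2, hs1lt]⟩
    rw [(hasDerivAt_kfun q hq3 β h hx01).deriv]
    have := P2 (show x ∈ Ico sp 1 from ⟨le_of_lt hx.1, hx01.2⟩)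
      (show (1+z)/2 ∈ Ico sp 1 from ⟨le_of_lt hsps1, hs1lt⟩) hx.2
    rw [hkd1] at this
    exact this
  have A5 : StrictMonoOn (kfun q β h) (Icc ((1+z)/2) 1) := by
    apply strictMonoOn_of_deriv_pos (convex_Icc _ _) hkc.continuousOn
    intro x hx
    rw [interior_Icc] at hx
    have hx01 : x ∈ Ioo (0:ℝ) 1 := ⟨lt_trans hs1pos hx.1, hx.2⟩
    rw [(hasDerivAt_kfun q hq3 β h hx01).deriv]
    have := P2 (show (1+z)/2 ∈ Ico sp 1 from ⟨le_of_lt hsps1, hs1lt⟩)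
      (show x ∈ Ico sp 1 from ⟨le_of_lt (lt_trans hsps1 hx.1), hx.2⟩) hx.1
    rw [hkd1] at this
    exact this
  refine ⟨hkval, ?_⟩
  intro s hs hne1 hne2
  rcases lt_trichotomy s ((1-z)/2) with hc | hc | hc
  · exact A1 ⟨hs.1, le_of_lt hc⟩ ⟨le_of_lt hs2pos, le_refl _⟩ hc
  · exact absurd hc hne2
  · rcases le_or_gt s sm with hc2 | hc2
    · exact A2 ⟨le_refl _, le_of_lt hs2sm⟩ ⟨le_of_lt hc, hc2⟩ hc
    · rcases lt_or_ge s sp with hc3 | hc3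
      · -- middle concave region
        have hmm : s ∈ Icc sm sp := ⟨le_of_lt hc2, le_of_lt hc3⟩
        obtain ⟨a, b, ha, hb, hab, heq⟩ := (Convex.mem_Icc (le_of_lt hsmsp)).1 hmm
        have ka : kfun q β h ((1-z)/2) < kfun q β h sm :=
          A2 ⟨le_refl _, le_of_lt hs2sm⟩ ⟨le_of_lt hs2sm, le_refl _⟩ hs2sm
        have kb : kfun q β h ((1-z)/2) < kfun q β h sp := by
          have h8 := A4 ⟨le_refl _, le_of_lt hsps1⟩ ⟨le_of_lt hsps1, le_refl _⟩ hsps1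
          linarith [hkval]
        have hconc := A3.concaveOn.2 (show sm ∈ Icc sm sp from ⟨le_refl _, le_of_lt hsmsp⟩)
          (show sp ∈ Icc sm sp from ⟨le_of_lt hsmsp, le_refl _⟩) ha hb hab
        simp only [smul_eq_mul] at hconc
        rw [heq] at hconc
        have ha' : 0 < a := by
          rcases eq_or_lt_of_le ha with he | he
          · exfalso
            have : b = 1 := by linarith
            rw [← he, this] at heq
            simp at heq
            linarith [hc3, heq]
          · exact he
        have hb' : 0 < b := by
          rcases eq_or_lt_of_le hb with he | he
          · exfalso
            have : a = 1 := by linarith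
            rw [← he, this] at heq
            simp at heq
            linarith [hc2, heq]
          · exact he
        have m1 := mul_lt_mul_of_pos_left ka ha'
        have m2 := mul_lt_mul_of_pos_left kb hb'
        have hX : a * kfun q β h ((1-z)/2) + b * kfun q β h ((1-z)/2)
            = kfun q β h ((1-z)/2) := by
          linear_combination (kfun q β h ((1-z)/2)) * hab
        linarith
      · rcases lt_trichotomy s ((1+z)/2) with hc4 | hc4 | hc4
        · have h9 := A4 ⟨hc3, le_of_lt hc4⟩ ⟨le_of_lt hsps1, le_refl _⟩ hc4
          linarith [hkval]
        · exact absurd hc4 hne1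
        · have h9 := A5 ⟨le_refl _, le_of_lt hs1lt⟩ ⟨le_of_lt hc4, hs.2⟩ hc4
          linarith [hkval]

lemma xpar_eq_pos (q : ℕ) [NeZero q] (hq3 : 3 ≤ q) (z : ℝ) : xpar q z = xcan q ((1+z)/2) := by
  have hQ3 : (3:ℝ) ≤ (q:ℝ) := by exact_mod_cast hq3
  have nQ1 : (q:ℝ) - 1 ≠ 0 := ne_of_gt (by linarith)
  funext i
  unfold xpar xcan
  rcases eq_or_ne i 0 with rfl | hi
  · rw [if_pos rfl, if_pos rfl]
  · rw [if_neg hi, if_neg hi]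
    field_simp
    ring

lemma xpar_eq_neg (q : ℕ) [NeZero q] (hq3 : 3 ≤ q) (z : ℝ) : xpar q (-z) = xcan q ((1-z)/2) := by
  have hQ3 : (3:ℝ) ≤ (q:ℝ) := by exact_mod_cast hq3
  have nQ1 : (q:ℝ) - 1 ≠ 0 := ne_of_gt (by linarith)
  funext i
  unfold xpar xcan
  rcases eq_or_ne i 0 with rfl | hi
  · rw [if_pos rfl, if_pos rfl]
    ring
  · rw [if_neg hi, if_neg hi]
    field_simp
    ring

/-- For z ∈ (0,(q-2)/q), the point (β_z,h_z) lies on the critical line and the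
global minimum points of f_{β_z,h_z} on ℋ are exactly x_z and x_{-z}. -/
theorem stmt_1 (q : ℕ) [NeZero q] (hq : 3 ≤ q) (z : ℝ) (hz0 : 0 < z)
    (hz1 : z < ((q : ℝ) - 2) / q) :
    onCriticalLine q (betaZ q z) (hZ q z) ∧
    minSetF q (betaZ q z) (hZ q z) = {xpar q z, xpar q (-z)} := by
  have hQ3 : (3:ℝ) ≤ (q:ℝ) := by exact_mod_cast hq
  have hQ1 : (0:ℝ) < (q:ℝ) - 1 := by linarith
  have hzlt1 : z < 1 := basic_z hq hz0 hz1
  have hβpos : 0 < betaZ q z := betaZ_pos hq hz0 hz1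
  have hhpos : 0 < hZ q z := hZ_pos hq hz0 hz1
  obtain ⟨hkeq, hkmin⟩ := oneD q hq hz0 hz1
  have hs1mem : (1+z)/2 ∈ Icc (0:ℝ) 1 := ⟨by linarith, by linarith⟩
  have hs2mem : (1-z)/2 ∈ Icc (0:ℝ) 1 := ⟨by linarith, by linarith⟩
  -- every global minimizer is canonical
  have hcanon : ∀ x ∈ simplexH q,
      (∀ y ∈ simplexH q, fFE q (betaZ q z) (hZ q z) x ≤ fFE q (betaZ q z) (hZ q z) y) →
      x = xcan q (x 0) ∧ x 0 ∈ Icc (0:ℝ) 1 := by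
    intro x hxH hmin
    refine ⟨?_, hxH.2 0, ?_⟩
    · funext i
      unfold xcan
      rcases eq_or_ne i 0 with rfl | hi
      · simp
      · rw [if_neg hi]
        have heq : ∀ j : Fin q, j ≠ 0 → x j = x i := fun j hj =>
          min_coords_eq hβpos hhpos hxH hmin hj hi
        have hsum2 : ∑ k, x k = x 0 + ((q:ℝ) - 1) * x i := by
          have e1 : ∀ k : Fin q, x k = if k = 0 then x 0 else x i := by
            intro k
            rcases eq_or_ne k 0 with rfl | hk
            · simp
            · rw [if_neg hk]; exact heq k hk
          rw [Finset.sum_congr rfl fun k _ => e1 k, sum_ite_zero q _ _]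
        have hone := hxH.1
        rw [hsum2] at hone
        rw [eq_div_iff (ne_of_gt hQ1)]
        linarith
    · calc x 0 ≤ ∑ j, x j := Finset.single_le_sum (fun j _ => hxH.2 j) (Finset.mem_univ 0)
        _ = 1 := hxH.1
  have hfcan : ∀ x : Fin q → ℝ, x = xcan q (x 0) →
      fFE q (betaZ q z) (hZ q z) x = kfun q (betaZ q z) (hZ q z) (x 0) := by
    intro x hform
    conv_lhs => rw [hform]
    exact fFE_xcan q hq _ _ _
  constructor
  · refine ⟨le_of_lt hhpos, hZ_lt_h0 hq hz0 hz1, ?_⟩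
    unfold hZ
    ring
  · ext x
    simp only [minSetF, Set.mem_setOf_eq, Set.mem_insert_iff, Set.mem_singleton_iff]
    constructor
    · rintro ⟨hxH, hmin⟩
      obtain ⟨hform, hs01⟩ := hcanon x hxH hmin
      have hfx := hfcan x hform
      have hcases : x 0 = (1+z)/2 ∨ x 0 = (1-z)/2 := by
        by_contra hcon
        push_neg at hcon
        have hlt := hkmin (x 0) hs01 hcon.1 hcon.2
        have hle := hmin (xcan q ((1-z)/2)) (xcan_mem q hq hs2mem)
        rw [fFE_xcan q hq, hfx] at hle
        linarith
      rcases hcases with he | he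
      · left
        rw [hform, he, ← xpar_eq_pos q hq z]
      · right
        rw [hform, he, ← xpar_eq_neg q hq z]
    · -- both parametrized points are global minimizers
      obtain ⟨xs, hxsH, hxsmin⟩ := (isCompact_simplexH q).exists_isMinOn
        (nonempty_simplexH q) (continuous_fFE q (betaZ q z) (hZ q z)).continuousOn
      have hxsmin' : ∀ w ∈ simplexH q,
          fFE q (betaZ q z) (hZ q z) xs ≤ fFE q (betaZ q z) (hZ q z) w :=
        fun w hw => hxsmin hw
      obtain ⟨hformS, hs01S⟩ := hcanon xs hxsH hxsmin'
      have hfxs := hfcan xs hformS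
      have hk1 : kfun q (betaZ q z) (hZ q z) ((1-z)/2) ≤ kfun q (betaZ q z) (hZ q z) (xs 0) := by
        rcases eq_or_ne (xs 0) ((1+z)/2) with he | he
        · rw [he, ← hkeq]
        · rcases eq_or_ne (xs 0) ((1-z)/2) with he2 | he2
          · rw [he2]
          · exact le_of_lt (hkmin (xs 0) hs01S he he2)
      have hmain : ∀ y ∈ simplexH q,
          kfun q (betaZ q z) (hZ q z) ((1-z)/2) ≤ fFE q (betaZ q z) (hZ q z) y := by
        intro y hy
        calc kfun q (betaZ q z) (hZ q z) ((1-z)/2)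
            ≤ kfun q (betaZ q z) (hZ q z) (xs 0) := hk1
          _ = fFE q (betaZ q z) (hZ q z) xs := hfxs.symm
          _ ≤ fFE q (betaZ q z) (hZ q z) y := hxsmin' y hy
      rintro (rfl | rfl)
      · refine ⟨by rw [xpar_eq_pos q hq z]; exact xcan_mem q hq hs1mem, ?_⟩
        intro y hy
        have e : fFE q (betaZ q z) (hZ q z) (xpar q z)
            = kfun q (betaZ q z) (hZ q z) ((1-z)/2) := by
          rw [xpar_eq_pos q hq z, fFE_xcan q hq, hkeq]
        rw [e]
        exact hmain y hy
      · refine ⟨by rw [xpar_eq_neg q hq z]; exact xcan_mem q hq hs2mem, ?_⟩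
        intro y hy
        have e : fFE q (betaZ q z) (hZ q z) (xpar q (-z))
            = kfun q (betaZ q z) (hZ q z) ((1-z)/2) := by
          rw [xpar_eq_neg q hq z, fFE_xcan q hq]
        rw [e]
        exact hmain y hy

end CWP
end
end

section
/- Let q ≥ 3, h = 0 and 0 ≤ β < β_c. Then the unique global minimum point of f_{β,0} on the simplex ℋ is the uniform vector (1/q, …, 1/q). -/
open Finset

noncomputable section

namespace CWP

/-- The critical inverse temperature β_c for q > 2. -/
def betaC (q : ℕ) : ℝ := 2 * ((q : ℝ) - 1) / ((q : ℝ) - 2) * Real.log ((q : ℝ) - 1)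


/-- Key elementary bound: (x+t)·log(Q(x+t)) ≤ x·log(Qx) + t(log(Qx)+1) + t²/x. -/
lemma mul_log_add_le (Q x t : ℝ) (hQ : 0 < Q) (hx : 0 < x) (hxt : 0 < x + t) :
    (x + t) * Real.log (Q * (x + t)) ≤
      x * Real.log (Q * x) + t * (Real.log (Q * x) + 1) + t ^ 2 / x := by
  have h1 : Real.log (Q * (x + t)) = Real.log (Q * x) + Real.log ((x + t) / x) := by
    rw [← Real.log_mul (by positivity) (by positivity)]
    congr 1
    field_simp
  have h2 : Real.log ((x + t) / x) ≤ t / x := by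
    have h := Real.log_le_sub_one_of_pos (show (0:ℝ) < (x + t) / x by positivity)
    have : (x + t) / x - 1 = t / x := by field_simp; ring
    linarith [h, this.le]
  have h3 : (x + t) * ((x + t) / x - 1) = t + t ^ 2 / x + t - t := by
    field_simp
    ring
  have h4 : (x + t) * Real.log ((x + t) / x) ≤ t + t ^ 2 / x := by
    have := mul_le_mul_of_nonneg_left h2 hxt.le
    have he : (x + t) * (t / x) = t + t ^ 2 / x := by field_simp
    linarith [this, he.le]
  rw [h1]
  nlinarith [h4]

/-- log(Q-1) < ((Q-1)² - 1)/(2(Q-1)); consequence of log x < x/2 - 1/(2x) for x>1. -/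
lemma log_lt_aux (x : ℝ) (hx : 1 < x) : Real.log x < x / 2 - 1 / (2 * x) := by
  set φ : ℝ → ℝ := fun s => s / 2 - 1 / (2 * s) - Real.log s with hφ
  have hder : ∀ s : ℝ, 0 < s → HasDerivAt φ (1 / 2 + 1 / (2 * s ^ 2) - 1 / s) s := by
    intro s hs
    have h1 : HasDerivAt (fun u : ℝ => u / 2) (1 / 2) s := (hasDerivAt_id s).div_const 2
    have h2 : HasDerivAt (fun u : ℝ => 2 * u) 2 s := by
      simpa using (hasDerivAt_id s).const_mul 2
    have h3 : HasDerivAt (fun u : ℝ => 1 / (2 * u)) (-2 / (2 * s) ^ 2) s := by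
      rw [show (fun u : ℝ => 1 / (2 * u)) = (fun u => 2 * u)⁻¹ from by funext u; exact one_div _]
      exact h2.inv (by positivity)
    have h4 : HasDerivAt Real.log s⁻¹ s := Real.hasDerivAt_log (ne_of_gt hs)
    have := (h1.sub h3).sub h4
    refine this.congr_deriv ?_
    field_simp
    ring
  have hmono : StrictMonoOn φ (Set.Ici 1) := by
    apply strictMonoOn_of_deriv_pos (convex_Ici 1)
    · intro s hs
      exact ((hder s (lt_of_lt_of_le one_pos hs)).continuousAt).continuousWithinAt
    · intro s hs
      rw [interior_Ici] at hs
      have hs1 : (1:ℝ) < s := hs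
      rw [(hder s (by linarith)).deriv]
      have : 1 / 2 + 1 / (2 * s ^ 2) - 1 / s = (s - 1) ^ 2 / (2 * s ^ 2) := by
        field_simp
        ring
    
      rw [this]
      have h1 : (0:ℝ) < (s - 1) ^ 2 := by
        have : s - 1 ≠ 0 := by intro h; nlinarith
        positivity
      positivity
  have h0 : φ 1 = 0 := by simp [hφ]
  have := hmono (Set.self_mem_Ici) (Set.mem_Ici.mpr hx.le) hx
  rw [h0] at this
  simp only [hφ] at this
  linarith

/-- Move mass t from coordinate j to coordinate i. -/

def move {q : ℕ} (p : Fin q → ℝ) (i j : Fin q) (t : ℝ) : Fin q → ℝ :=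
  fun k => if k = i then p i + t else if k = j then p j - t else p k

lemma sum_move {q : ℕ} (p : Fin q → ℝ) {i j : Fin q} (hij : i ≠ j) (t : ℝ) (f : ℝ → ℝ) :
    ∑ k, f (move p i j t k) =
      (∑ k, f (p k)) + (f (p i + t) - f (p i)) + (f (p j - t) - f (p j)) := by
  have key : ∀ k, f (move p i j t k) =
      f (p k) + (if k = i then f (p i + t) - f (p i) else 0)
        + (if k = j then f (p j - t) - f (p j) else 0) := by
    intro k
    unfold move
    by_cases h1 : k = i
    · subst h1
      simp [hij]
    · by_cases h2 : k = j
      · subst h2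
        simp [h1]
      · simp [h1, h2]
  simp only [key, Finset.sum_add_distrib, Finset.sum_ite_eq' univ, Finset.mem_univ, if_true]

lemma move_mem_simplex {q : ℕ} {p : Fin q → ℝ} (hp : p ∈ simplexH q) {i j : Fin q}
    (hij : i ≠ j) {t : ℝ} (h1 : 0 ≤ p i + t) (h2 : 0 ≤ p j - t) :
    move p i j t ∈ simplexH q := by
  constructor
  · have := sum_move p hij t id
    simp only [id] at this
    rw [this, hp.1]
    ring
  · intro k
    unfold move
    by_cases hk1 : k = i
    · simp [hk1, h1]
    · by_cases hk2 : k = j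
      · subst hk2
        simp [hij.symm, h2]
      · simp [hk1, hk2, hp.2 k]

lemma fFE_move_sub {q : ℕ} [NeZero q] (β : ℝ) (p : Fin q → ℝ) {i j : Fin q} (hij : i ≠ j)
    (t : ℝ) :
    fFE q β 0 (move p i j t) - fFE q β 0 p =
      ((p i + t) * Real.log (q * (p i + t)) - p i * Real.log (q * p i)
        + ((p j - t) * Real.log (q * (p j - t)) - p j * Real.log (q * p j)))
      - β / 2 * ((p i + t) ^ 2 - p i ^ 2 + ((p j - t) ^ 2 - p j ^ 2)) := by
  unfold fFE
  rw [sum_move p hij t (fun s => s * Real.log (q * s)), sum_move p hij t (fun s => s ^ 2)]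
  ring

lemma coord_le_one {q : ℕ} {p : Fin q → ℝ} (hp : p ∈ simplexH q) (k : Fin q) : p k ≤ 1 := by
  have h := Finset.single_le_sum (f := p) (fun i _ => hp.2 i) (Finset.mem_univ k)
  rw [hp.1] at h
  exact h

lemma qpos {q : ℕ} [NeZero q] : (0:ℝ) < q := by
  have := Nat.pos_of_ne_zero (NeZero.ne q)
  exact_mod_cast this


/-- A minimizer has all coordinates positive. -/
lemma minimizer_pos {q : ℕ} [NeZero q] {β : ℝ} (hβ0 : 0 ≤ β) {p : Fin q → ℝ}
    (hp : p ∈ minSetF q β 0) (i : Fin q) : 0 < p i := by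
  obtain ⟨hps, hmin⟩ := hp
  rcases (hps.2 i).lt_or_eq with h | h
  · exact h
  exfalso
  have hex : ∃ j, 0 < p j := by
    by_contra hno
    push_neg at hno
    have hs : (∑ k, p k) ≤ 0 := Finset.sum_nonpos (fun k _ => hno k)
    rw [hps.1] at hs; linarith
  obtain ⟨j, hj⟩ := hex
  have hij : i ≠ j := by rintro rfl; rw [← h] at hj; exact lt_irrefl _ hj
  have hpj1 : p j ≤ 1 := coord_le_one hps j
  have hQ : (0:ℝ) < q := qpos
  obtain ⟨t, ht0, htj, hlt⟩ : ∃ t : ℝ, 0 < t ∧ t ≤ p j / 2 ∧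
      Real.log ((q:ℝ) * t) = Real.log ((q:ℝ) * p j) + (-β - Real.log 2) := by
    refine ⟨p j / 2 * Real.exp (-β), by positivity, ?_, ?_⟩
    · nlinarith [Real.exp_le_one_iff.mpr (show -β ≤ 0 by linarith), Real.exp_pos (-β)]
    · have h1 : (q:ℝ) * (p j / 2 * Real.exp (-β)) = ((q:ℝ) * p j) * (Real.exp (-β) / 2) := by
        ring
      rw [h1, Real.log_mul (by positivity) (by positivity),
          Real.log_div (by positivity) (by norm_num), Real.log_exp]
  have hy : move p i j t ∈ simplexH q :=
    move_mem_simplex hps hij (by rw [← h]; linarith) (by linarith)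
  have hle : fFE q β 0 p ≤ fFE q β 0 (move p i j t) := hmin _ hy
  have hdiff := fFE_move_sub β p hij t
  rw [← h] at hdiff
  rw [zero_add] at hdiff
  have hB := mul_log_add_le q (p j) (-t) hQ hj (by linarith)
  rw [show p j + -t = p j - t from by ring, show (-t)^2 = t^2 from by ring] at hB
  have hlt' : t * Real.log ((q:ℝ) * t) =
      t * Real.log ((q:ℝ) * p j) + t * (-β - Real.log 2) := by rw [hlt]; ring
  have hlog2 : (0:ℝ) < Real.log 2 := Real.log_pos (by norm_num)
  have ht2 : t ^ 2 / p j ≤ t / 2 := by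
    rw [div_le_div_iff₀ hj (by norm_num)]
    nlinarith
  have hbta : β * t * p j ≤ β * t := by
    nlinarith [mul_nonneg (mul_nonneg hβ0 ht0.le) (show (0:ℝ) ≤ 1 - p j by linarith)]
  have hbt2 : 0 ≤ β * t ^ 2 := by positivity
  have hpos : 0 < t * Real.log 2 := mul_pos ht0 hlog2
  linarith [hle, hdiff.le, hdiff.ge, hB, hlt'.le, hlt'.ge, ht2, hbta, hbt2, hpos]

/-- At a minimizer, log pᵢ - β pᵢ takes the same value at all coordinates. -/
lemma minimizer_stat {q : ℕ} [NeZero q] {β : ℝ} (hβ0 : 0 ≤ β) {p : Fin q → ℝ}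
    (hp : p ∈ minSetF q β 0) {i j : Fin q} (hij : i ≠ j) :
    Real.log (p i) - β * p i = Real.log (p j) - β * p j := by
  have key : ∀ i j : Fin q, i ≠ j →
      ¬ (Real.log (p i) - β * p i < Real.log (p j) - β * p j) := by
    clear hij i j
    intro i j hij hlt'
    obtain ⟨hps, hmin⟩ := hp
    have hpi : 0 < p i := minimizer_pos hβ0 ⟨hps, hmin⟩ i
    have hpj : 0 < p j := minimizer_pos hβ0 ⟨hps, hmin⟩ j
    have hQ : (0:ℝ) < q := qpos
    obtain ⟨t, ht0, htj, htkey⟩ : ∃ t : ℝ, 0 < t ∧ t ≤ p j / 2 ∧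
        t^2 / p i + t^2 / p j ≤
          t * ((Real.log (p j) - β * p j) - (Real.log (p i) - β * p i)) / 2 := by
      set δ : ℝ := (Real.log (p j) - β * p j) - (Real.log (p i) - β * p i) with hδ
      have hδ0 : 0 < δ := by rw [hδ]; linarith
      set M : ℝ := 1 / p i + 1 / p j with hM
      have hM0 : 0 < M := by positivity
      refine ⟨min (p j / 2) (δ / (2 * M)), lt_min (by positivity) (by positivity),
        min_le_left _ _, ?_⟩
      set t : ℝ := min (p j / 2) (δ / (2 * M)) with htdef
      have ht0 : 0 < t := lt_min (by positivity) (by positivity)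
      have htM : t ≤ δ / (2 * M) := min_le_right _ _
      have h1 : t^2 / p i + t^2 / p j = t^2 * M := by rw [hM]; field_simp
      rw [h1]
      have h2 : t * M ≤ δ / 2 := by
        have h3 : M * (δ / (2 * M)) = δ / 2 := by field_simp
        nlinarith [mul_le_mul_of_nonneg_left htM hM0.le]
      nlinarith
    have hy : move p i j t ∈ simplexH q :=
      move_mem_simplex hps hij (by linarith) (by linarith)
    have hle : fFE q β 0 p ≤ fFE q β 0 (move p i j t) := hmin _ hy
    have hdiff := fFE_move_sub β p hij t
    have hBi := mul_log_add_le q (p i) t hQ hpi (by linarith)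
    have hBj := mul_log_add_le q (p j) (-t) hQ hpj (by linarith)
    rw [show p j + -t = p j - t from by ring, show (-t)^2 = t^2 from by ring] at hBj
    have htli : t * Real.log ((q:ℝ) * p i) = t * Real.log (q:ℝ) + t * Real.log (p i) := by
      rw [Real.log_mul (ne_of_gt hQ) (ne_of_gt hpi)]; ring
    have htlj : t * Real.log ((q:ℝ) * p j) = t * Real.log (q:ℝ) + t * Real.log (p j) := by
      rw [Real.log_mul (ne_of_gt hQ) (ne_of_gt hpj)]; ring
    have hbt2 : 0 ≤ β * t ^ 2 := by positivity
    have hpos : 0 < t * ((Real.log (p j) - β * p j) - (Real.log (p i) - β * p i)) :=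
      mul_pos ht0 (by linarith)
    linarith [hle, hdiff.le, hdiff.ge, hBi, hBj, htli.le, htli.ge, htlj.le, htlj.ge,
      htkey, hbt2, hpos]
  rcases lt_trichotomy (Real.log (p i) - β * p i) (Real.log (p j) - β * p j) with h | h | h
  · exact absurd h (key i j hij)
  · exact h
  · exact absurd h (key j i hij.symm)

/-- A minimizer cannot have two distinct coordinates sharing a common value a with βa > 1. -/
lemma minimizer_nodouble {q : ℕ} [NeZero q] {β : ℝ} (hβ0 : 0 ≤ β) {p : Fin q → ℝ}
    (hp : p ∈ minSetF q β 0) {i j : Fin q} (hij : i ≠ j) (heq : p i = p j)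
    (hhigh : 1 < β * p i) : False := by
  obtain ⟨hps, hmin⟩ := hp
  have hpi : 0 < p i := minimizer_pos hβ0 ⟨hps, hmin⟩ i
  have hQ : (0:ℝ) < q := qpos
  have hb1 : 0 < p i * β + 1 := by nlinarith
  have hb2 : 0 < p i * β - 1 := by nlinarith
  obtain ⟨t, ht0, hta, hkey⟩ : ∃ t : ℝ, 0 < t ∧ t < p i / 2 ∧
      2 / (p i - t) < β + 1 / p i := by
    refine ⟨p i * (p i * β - 1) / (2 * (p i * β + 1)), by positivity, ?_, ?_⟩
    · rw [div_lt_div_iff₀ (by positivity) (by norm_num)]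
      nlinarith
    · set t : ℝ := p i * (p i * β - 1) / (2 * (p i * β + 1)) with htdef
      have ht0 : 0 < t := by positivity
      have hta : t < p i / 2 := by
        rw [htdef, div_lt_div_iff₀ (by positivity) (by norm_num)]
        nlinarith
      have hat : 0 < p i - t := by linarith
      have he : β + 1 / p i = (p i * β + 1) / p i := by field_simp
      rw [he, div_lt_div_iff₀ hat hpi]
      have ht_eq : t * (2 * (p i * β + 1)) = p i * (p i * β - 1) := by
        rw [htdef]; field_simp
      nlinarith [ht_eq, mul_pos hpi hb2]
  have hat : 0 < p i - t := by linarith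
  have hy : move p i j t ∈ simplexH q :=
    move_mem_simplex hps hij (by linarith) (by rw [← heq]; linarith)
  have hle : fFE q β 0 p ≤ fFE q β 0 (move p i j t) := hmin _ hy
  have hdiff := fFE_move_sub β p hij t
  rw [← heq] at hdiff
  have hlp : Real.log ((q:ℝ) * (p i + t)) =
      Real.log ((q:ℝ) * p i) + Real.log ((p i + t) / p i) := by
    rw [← Real.log_mul (by positivity) (by positivity)]
    congr 1; field_simp
  have hlm : Real.log ((q:ℝ) * (p i - t)) =
      Real.log ((q:ℝ) * p i) + Real.log ((p i - t) / p i) := by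
    rw [← Real.log_mul (by positivity) (by positivity)]
    congr 1; field_simp
  have he1 : Real.log ((p i + t) / p i) + Real.log ((p i - t) / p i) ≤
      - (t ^ 2 / p i ^ 2) := by
    rw [← Real.log_mul (by positivity) (by positivity)]
    have h := Real.log_le_sub_one_of_pos
      (show (0:ℝ) < (p i + t) / p i * ((p i - t) / p i) by positivity)
    have he : (p i + t) / p i * ((p i - t) / p i) - 1 = - (t ^ 2 / p i ^ 2) := by
      field_simp; ring
    linarith [h, he.le]
  have he2 : Real.log ((p i + t) / p i) - Real.log ((p i - t) / p i) ≤
      2 * t / (p i - t) := by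
    rw [← Real.log_div (by positivity) (by positivity)]
    have heq2 : (p i + t) / p i / ((p i - t) / p i) = (p i + t) / (p i - t) := by
      field_simp
    rw [heq2]
    have h := Real.log_le_sub_one_of_pos (show (0:ℝ) < (p i + t) / (p i - t) by positivity)
    have he : (p i + t) / (p i - t) - 1 = 2 * t / (p i - t) := by field_simp; ring
    linarith [h, he.le]
  have hcomb : (p i + t) * Real.log ((q:ℝ) * (p i + t))
      + (p i - t) * Real.log ((q:ℝ) * (p i - t))
      - 2 * (p i * Real.log ((q:ℝ) * p i)) ≤
      p i * (- (t ^ 2 / p i ^ 2)) + t * (2 * t / (p i - t)) := by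
    rw [hlp, hlm]
    have e1 := mul_le_mul_of_nonneg_left he1 hpi.le
    have e2 := mul_le_mul_of_nonneg_left he2 ht0.le
    nlinarith [e1, e2]
  have hfin : p i * (- (t ^ 2 / p i ^ 2)) + t * (2 * t / (p i - t)) - β * t ^ 2 < 0 := by
    have h1 : p i * (- (t ^ 2 / p i ^ 2)) = - (t^2 / p i) := by field_simp
    have h2 : t * (2 * t / (p i - t)) = t^2 * (2 / (p i - t)) := by ring
    rw [h1, h2]
    have h3 : t^2 * (2 / (p i - t)) < t^2 * (β + 1 / p i) :=
      mul_lt_mul_of_pos_left hkey (by positivity)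
    have h4 : t^2 * (β + 1 / p i) = β * t^2 + t^2 / p i := by ring
    linarith [h3, h4.le, h4.ge]
  linarith [hle, hdiff.le, hdiff.ge, hcomb, hfin]



lemma hasDerivAt_mul_log (Q s : ℝ) (hQ : 0 < Q) (hs : 0 < s) :
    HasDerivAt (fun t => t * Real.log (Q * t)) (Real.log (Q * s) + 1) s := by
  have hQt : HasDerivAt (fun t : ℝ => Q * t) Q s := by
    simpa using (hasDerivAt_id s).const_mul Q
  have h1 : HasDerivAt (fun t : ℝ => Real.log (Q * t)) ((Q * s)⁻¹ * Q) s :=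
    (Real.hasDerivAt_log (by positivity)).comp s hQt
  have h2 := (hasDerivAt_id s).mul h1
  refine h2.congr_deriv ?_
  field_simp
  simp only [id]
  ring

lemma hasDerivAt_G (Q c x : ℝ) (hQ : 3 ≤ Q) (hx0 : 0 < x) (hx1 : x < 1) :
    HasDerivAt (fun t => t * Real.log (Q * t)
        + (Q - 1) * (((1 - t) / (Q - 1)) * Real.log (Q * ((1 - t) / (Q - 1))))
        - c * (t - 1 / Q) ^ 2)
      (Real.log x - Real.log (1 - x) + Real.log (Q - 1) - 2 * c * (x - 1 / Q)) x := by
  have hQ0 : (0:ℝ) < Q := by linarith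
  have hQ1 : (0:ℝ) < Q - 1 := by linarith
  have hbx : 0 < (1 - x) / (Q - 1) := div_pos (by linarith) hQ1
  have hu : HasDerivAt (fun t : ℝ => (1 - t) / (Q - 1)) (-1 / (Q - 1)) x := by
    have := ((hasDerivAt_const x (1:ℝ)).sub (hasDerivAt_id x)).div_const (Q - 1)
    simpa using this
  have h1 := hasDerivAt_mul_log Q x hQ0 hx0
  have h2 : HasDerivAt (fun t : ℝ => ((1 - t) / (Q - 1)) * Real.log (Q * ((1 - t) / (Q - 1))))
      ((Real.log (Q * ((1 - x) / (Q - 1))) + 1) * (-1 / (Q - 1))) x :=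
    by have := (hasDerivAt_mul_log Q _ hQ0 hbx).comp x hu; exact this
  have h3 : HasDerivAt (fun t : ℝ => c * (t - 1 / Q) ^ 2) (c * (2 * (x - 1 / Q))) x := by
    have h4 : HasDerivAt (fun t : ℝ => (t - 1 / Q) ^ 2) (2 * (x - 1 / Q)) x := by
      simpa using ((hasDerivAt_id x).sub_const (1 / Q)).fun_pow 2
    simpa using h4.const_mul c
  have htot := (h1.add (h2.const_mul (Q - 1))).sub h3
  refine htot.congr_deriv ?_
  have e1 : Real.log (Q * x) = Real.log Q + Real.log x :=
    Real.log_mul (ne_of_gt hQ0) (ne_of_gt hx0)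
  have e2 : Real.log (Q * ((1 - x) / (Q - 1)))
      = Real.log Q + (Real.log (1 - x) - Real.log (Q - 1)) := by
    rw [Real.log_mul (ne_of_gt hQ0) (ne_of_gt hbx),
      Real.log_div (by linarith : (1:ℝ) - x ≠ 0) (ne_of_gt hQ1)]
  rw [e1, e2]
  field_simp
  ring

lemma hasDerivAt_Gd (Q c x : ℝ) (hQ : 3 ≤ Q) (hx0 : 0 < x) (hx1 : x < 1) :
    HasDerivAt (fun t => Real.log t - Real.log (1 - t) + Real.log (Q - 1) - 2 * c * (t - 1 / Q))
      (1 / x + 1 / (1 - x) - 2 * c) x := by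
  have h1 : HasDerivAt (fun t : ℝ => Real.log (1 - t)) ((1 - x)⁻¹ * (0 - 1)) x :=
    (Real.hasDerivAt_log (by linarith : (1:ℝ) - x ≠ 0)).comp x
      ((hasDerivAt_const x (1:ℝ)).sub (hasDerivAt_id x))
  have h2 : HasDerivAt (fun t : ℝ => 2 * c * (t - 1 / Q)) (2 * c) x := by
    simpa using ((hasDerivAt_id x).sub_const (1 / Q)).const_mul (2 * c)
  have htot := (((Real.hasDerivAt_log (ne_of_gt hx0)).sub h1).add_const
      (Real.log (Q - 1))).sub h2
  refine htot.congr_deriv ?_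
  have : (1:ℝ) - x ≠ 0 := by linarith
  field_simp
  ring

/-- The one-dimensional free-energy gap function. -/

def Gfun (Q c t : ℝ) : ℝ :=
  t * Real.log (Q * t) + (Q - 1) * (((1 - t) / (Q - 1)) * Real.log (Q * ((1 - t) / (Q - 1))))
    - c * (t - 1 / Q) ^ 2

/-- Its derivative. -/
def Gdfun (Q c t : ℝ) : ℝ :=
  Real.log t - Real.log (1 - t) + Real.log (Q - 1) - 2 * c * (t - 1 / Q)

lemma hasDerivAt_Gfun (Q c x : ℝ) (hQ : 3 ≤ Q) (hx0 : 0 < x) (hx1 : x < 1) :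
    HasDerivAt (fun t => Gfun Q c t) (Gdfun Q c x) x := by
  simpa [Gfun, Gdfun] using hasDerivAt_G Q c x hQ hx0 hx1

lemma hasDerivAt_Gdfun (Q c x : ℝ) (hQ : 3 ≤ Q) (hx0 : 0 < x) (hx1 : x < 1) :
    HasDerivAt (fun t => Gdfun Q c t) (1 / x + 1 / (1 - x) - 2 * c) x := by
  simpa [Gdfun] using hasDerivAt_Gd Q c x hQ hx0 hx1

lemma Gd_root1 (Q c : ℝ) (hQ : 3 ≤ Q) : Gdfun Q c (1 / Q) = 0 := by
  have hQ0 : (0:ℝ) < Q := by linarith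
  have hQ1 : (0:ℝ) < Q - 1 := by linarith
  unfold Gdfun
  rw [show (1:ℝ) - 1 / Q = (Q - 1) / Q from by field_simp,
    Real.log_div (ne_of_gt hQ1) (ne_of_gt hQ0),
    Real.log_div one_ne_zero (ne_of_gt hQ0), Real.log_one]
  ring

lemma Gd_root2 (Q c : ℝ) (hQ : 3 ≤ Q) (hce : c * (Q - 2) = Q * Real.log (Q - 1)) :
    Gdfun Q c ((Q - 1) / Q) = 0 := by
  have hQ0 : (0:ℝ) < Q := by linarith
  have hQ1 : (0:ℝ) < Q - 1 := by linarith
  unfold Gdfun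
  have e1 : (1 : ℝ) - (Q - 1) / Q = 1 / Q := by field_simp; ring
  have e4 : 2 * c * ((Q - 1) / Q - 1 / Q) = 2 * Real.log (Q - 1) := by
    rw [show (Q - 1) / Q - 1 / Q = (Q - 2) / Q from by ring]
    field_simp
    linear_combination hce
  rw [e1, e4, Real.log_div (ne_of_gt hQ1) (ne_of_gt hQ0),
    Real.log_div one_ne_zero (ne_of_gt hQ0), Real.log_one]
  ring

lemma G_root1 (Q c : ℝ) (hQ : 3 ≤ Q) : Gfun Q c (1 / Q) = 0 := by
  have hQ0 : (0:ℝ) < Q := by linarith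
  have hQ1 : (0:ℝ) < Q - 1 := by linarith
  unfold Gfun
  have e1 : Q * (1 / Q) = 1 := by field_simp
  have e2 : (1 - 1 / Q) / (Q - 1) = 1 / Q := by field_simp
  rw [e2, e1, Real.log_one]
  ring

lemma G_root2 (Q c : ℝ) (hQ : 3 ≤ Q) (hce : c * (Q - 2) = Q * Real.log (Q - 1)) :
    Gfun Q c ((Q - 1) / Q) = 0 := by
  have hQ0 : (0:ℝ) < Q := by linarith
  have hQ1 : (0:ℝ) < Q - 1 := by linarith
  unfold Gfun
  have e1 : Q * ((Q - 1) / Q) = Q - 1 := by field_simp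
  have e2 : (1 - (Q - 1) / Q) / (Q - 1) = 1 / (Q * (Q - 1)) := by
    field_simp
    try ring
  have e3 : Q * (1 / (Q * (Q - 1))) = (Q - 1)⁻¹ := by field_simp
  have e4 : c * ((Q - 1) / Q - 1 / Q) ^ 2 = (Q - 2) * Real.log (Q - 1) / Q := by
    rw [show (Q - 1) / Q - 1 / Q = (Q - 2) / Q from by ring]
    field_simp
    linear_combination (Q - 2) * hce
  rw [e2, e1, e3, Real.log_inv, e4]
  field_simp
  ring

lemma GdSM (Q c x y : ℝ) (hQ : 3 ≤ Q) (hx : 0 < x) (hy : y < 1)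
    (hsign : ∀ s, x < s → s < y → 2 * c * (s * (1 - s)) < 1) :
    StrictMonoOn (fun t => Gdfun Q c t) (Set.Icc x y) := by
  apply strictMonoOn_of_deriv_pos (convex_Icc x y)
  · intro s hs
    exact (hasDerivAt_Gdfun Q c s hQ (lt_of_lt_of_le hx hs.1)
      (lt_of_le_of_lt hs.2 hy)).continuousAt.continuousWithinAt
  · intro s hs
    rw [interior_Icc] at hs
    have hs0 : 0 < s := lt_trans hx hs.1
    have hs1 : s < 1 := lt_trans hs.2 hy
    rw [(hasDerivAt_Gdfun Q c s hQ hs0 hs1).deriv]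
    have hss : 0 < s * (1 - s) := by nlinarith
    have hsne : s ≠ 0 := ne_of_gt hs0
    have h1s : (1:ℝ) - s ≠ 0 := by
      intro hcon; rw [sub_eq_zero] at hcon; exact (ne_of_lt hs1) hcon.symm
    have he : 1 / s + 1 / (1 - s) - 2 * c = (1 - 2 * c * (s * (1 - s))) / (s * (1 - s)) := by
      field_simp
      ring
    rw [he]
    exact div_pos (by linarith [hsign s hs.1 hs.2]) hss

lemma GdSA (Q c x y : ℝ) (hQ : 3 ≤ Q) (hx : 0 < x) (hy : y < 1)
    (hsign : ∀ s, x < s → s < y → 1 < 2 * c * (s * (1 - s))) :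
    StrictAntiOn (fun t => Gdfun Q c t) (Set.Icc x y) := by
  apply strictAntiOn_of_deriv_neg (convex_Icc x y)
  · intro s hs
    exact (hasDerivAt_Gdfun Q c s hQ (lt_of_lt_of_le hx hs.1)
      (lt_of_le_of_lt hs.2 hy)).continuousAt.continuousWithinAt
  · intro s hs
    rw [interior_Icc] at hs
    have hs0 : 0 < s := lt_trans hx hs.1
    have hs1 : s < 1 := lt_trans hs.2 hy
    rw [(hasDerivAt_Gdfun Q c s hQ hs0 hs1).deriv]
    have hss : 0 < s * (1 - s) := by nlinarith
    have hsne : s ≠ 0 := ne_of_gt hs0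
    have h1s : (1:ℝ) - s ≠ 0 := by
      intro hcon; rw [sub_eq_zero] at hcon; exact (ne_of_lt hs1) hcon.symm
    have he : 1 / s + 1 / (1 - s) - 2 * c = (1 - 2 * c * (s * (1 - s))) / (s * (1 - s)) := by
      field_simp
      ring
    rw [he]
    exact div_neg_of_neg_of_pos (by linarith [hsign s hs.1 hs.2]) hss

lemma GM (Q c x y : ℝ) (hQ : 3 ≤ Q) (hx : 0 < x) (hy : y < 1) (hxy : x ≤ y)
    (hsign : ∀ s, x < s → s < y → 0 ≤ Gdfun Q c s) : Gfun Q c x ≤ Gfun Q c y := by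
  have hmono : MonotoneOn (fun t => Gfun Q c t) (Set.Icc x y) := by
    apply monotoneOn_of_deriv_nonneg (convex_Icc x y)
    · intro s hs
      exact (hasDerivAt_Gfun Q c s hQ (lt_of_lt_of_le hx hs.1)
        (lt_of_le_of_lt hs.2 hy)).continuousAt.continuousWithinAt
    · intro s hs
      rw [interior_Icc] at hs
      exact (hasDerivAt_Gfun Q c s hQ (lt_trans hx hs.1)
        (lt_trans hs.2 hy)).differentiableAt.differentiableWithinAt
    · intro s hs
      rw [interior_Icc] at hs
      rw [(hasDerivAt_Gfun Q c s hQ (lt_trans hx hs.1) (lt_trans hs.2 hy)).deriv]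
      exact hsign s hs.1 hs.2
  exact hmono (Set.mem_Icc.mpr ⟨le_rfl, hxy⟩) (Set.mem_Icc.mpr ⟨hxy, le_rfl⟩) hxy

lemma GA (Q c x y : ℝ) (hQ : 3 ≤ Q) (hx : 0 < x) (hy : y < 1) (hxy : x ≤ y)
    (hsign : ∀ s, x < s → s < y → Gdfun Q c s ≤ 0) : Gfun Q c y ≤ Gfun Q c x := by
  have hmono : AntitoneOn (fun t => Gfun Q c t) (Set.Icc x y) := by
    apply antitoneOn_of_deriv_nonpos (convex_Icc x y)
    · intro s hs
      exact (hasDerivAt_Gfun Q c s hQ (lt_of_lt_of_le hx hs.1)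
        (lt_of_le_of_lt hs.2 hy)).continuousAt.continuousWithinAt
    · intro s hs
      rw [interior_Icc] at hs
      exact (hasDerivAt_Gfun Q c s hQ (lt_trans hx hs.1)
        (lt_trans hs.2 hy)).differentiableAt.differentiableWithinAt
    · intro s hs
      rw [interior_Icc] at hs
      rw [(hasDerivAt_Gfun Q c s hQ (lt_trans hx hs.1) (lt_trans hs.2 hy)).deriv]
      exact hsign s hs.1 hs.2
  exact hmono (Set.mem_Icc.mpr ⟨le_rfl, hxy⟩) (Set.mem_Icc.mpr ⟨hxy, le_rfl⟩) hxy

set_option maxHeartbeats 1000000 in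
lemma key1D_gen (Q c : ℝ) (hQ : 3 ≤ Q) (hc0 : 0 < c) (hcQ : 2 * c * (Q - 1) < Q ^ 2)
    (hce : c * (Q - 2) = Q * Real.log (Q - 1)) {a : ℝ} (ha1 : 1 / Q ≤ a) (ha2 : a < 1) :
    0 ≤ Gfun Q c a := by
  have hQ0 : (0:ℝ) < Q := by linarith
  have hQ1 : (0:ℝ) < Q - 1 := by linarith
  have hQ2 : (0:ℝ) < Q - 2 := by linarith
  obtain ⟨r, hr0, hr2⟩ : ∃ r : ℝ, 0 ≤ r ∧ r ^ 2 = max 0 (1 / 4 - 1 / (2 * c)) :=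
    ⟨Real.sqrt (max 0 (1 / 4 - 1 / (2 * c))), Real.sqrt_nonneg _,
      Real.sq_sqrt (le_max_left _ _)⟩
  have h1Q2 : 1 / Q ≤ 1 / 2 := by
    rw [div_le_div_iff₀ hQ0 (by norm_num : (0:ℝ) < 2)]
    linarith
  have hrle : r ≤ 1 / 2 - 1 / Q := by
    have h1 : max 0 (1 / 4 - 1 / (2 * c)) ≤ (1 / 2 - 1 / Q) ^ 2 := by
      apply max_le
      · positivity
      · have h2 : (Q - 1) / Q ^ 2 ≤ 1 / (2 * c) := by
          rw [div_le_div_iff₀ (by positivity) (by positivity)]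
          nlinarith
        have e : (Q - 1) / Q ^ 2 = 1 / Q - 1 / Q ^ 2 := by field_simp
        have e2 : (1 / 2 - 1 / Q) ^ 2 = 1 / 4 - 1 / Q + 1 / Q ^ 2 := by ring
        rw [e] at h2
        linarith
    nlinarith [h1, hr2, hr0, h1Q2, sq_nonneg (r + (1 / 2 - 1 / Q))]
  have ha₁pos : 0 < 1 / 2 - r := by
    have hQinv : 0 < 1 / Q := by positivity
    linarith [hrle]
  have hQle : 1 / Q ≤ 1 / 2 - r := by linarith [hrle]
  have hhatlt : (Q - 1) / Q < 1 := by rw [div_lt_one hQ0]; linarith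
  have hhatge : 1 / 2 + r ≤ (Q - 1) / Q := by
    have e : (Q - 1) / Q = 1 - 1 / Q := by field_simp
    rw [e]; linarith [hrle]
  have ha₁le : (1 / 2 - r) * (1 - (1 / 2 - r)) ≤ 1 / (2 * c) := by
    have h := le_max_right (0:ℝ) (1 / 4 - 1 / (2 * c))
    rw [← hr2] at h
    nlinarith
  -- sign facts
  have sign_out : ∀ s : ℝ, 0 < s → (s < 1 / 2 - r ∨ 1 / 2 + r < s) →
      2 * c * (s * (1 - s)) < 1 := by
    intro s hs0 hcase
    have hkey : s * (1 - s) < (1 / 2 - r) * (1 - (1 / 2 - r)) := by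
      rcases hcase with h | h
      · nlinarith [mul_pos (show 0 < (1 / 2 - r) - s by linarith)
          (show 0 < (1 / 2 + r) - s by linarith)]
      · nlinarith [mul_pos (show 0 < s - (1 / 2 + r) by linarith)
          (show 0 < s - (1 / 2 - r) by linarith)]
    have h2 : 2 * c * (1 / (2 * c)) = 1 := by field_simp
    nlinarith [ha₁le, hkey]
  have sign_mid : ∀ s : ℝ, 1 / 2 - r < s → s < 1 / 2 + r → 1 < 2 * c * (s * (1 - s)) := by
    intro s h1 h2
    have hrpos : 0 < r := by linarith
    have hmax : (0:ℝ) ≤ 1 / 4 - 1 / (2 * c) := by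
      by_contra hneg
      push_neg at hneg
      have : max 0 (1 / 4 - 1 / (2 * c)) = 0 := max_eq_left (by linarith)
      rw [this] at hr2
      nlinarith
    have hr2' : r ^ 2 = 1 / 4 - 1 / (2 * c) := by rw [hr2, max_eq_right hmax]
    have hkey : 1 / (2 * c) < s * (1 - s) := by
      nlinarith [mul_pos (show 0 < s - (1 / 2 - r) by linarith)
        (show 0 < (1 / 2 + r) - s by linarith)]
    have h3 : 2 * c * (1 / (2 * c)) = 1 := by field_simp
    nlinarith [hkey]
  -- region conclusions
  have R1 : ∀ x : ℝ, 1 / Q ≤ x → x ≤ 1 / 2 - r → 0 ≤ Gfun Q c x := by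
    intro x hx1 hx2
    have hQinv : 0 < 1 / Q := by positivity
    have hlt1 : (1 / 2 - r : ℝ) < 1 := by linarith
    have hmonoGd := GdSM Q c (1 / Q) (1 / 2 - r) hQ hQinv hlt1
      (fun s hs1 hs2 => sign_out s (by linarith) (Or.inl hs2))
    have hsign : ∀ s, 1 / Q < s → s < x → 0 ≤ Gdfun Q c s := by
      intro s hs1 hs2
      have h := hmonoGd (Set.mem_Icc.mpr ⟨le_rfl, by linarith⟩)
        (Set.mem_Icc.mpr ⟨hs1.le, by linarith⟩) hs1
      simp only at h
      rw [Gd_root1 Q c hQ] at h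
      linarith
    have h := GM Q c (1 / Q) x hQ hQinv (by linarith) hx1 hsign
    rw [G_root1 Q c hQ] at h
    linarith
  have R3 : ∀ x : ℝ, 1 / 2 + r ≤ x → x ≤ (Q - 1) / Q → 0 ≤ Gfun Q c x := by
    intro x hx1 hx2
    have hx0 : 0 < x := by linarith
    have hmonoGd := GdSM Q c (1 / 2 + r) ((Q - 1) / Q) hQ (by linarith) hhatlt
      (fun s hs1 hs2 => sign_out s (by linarith) (Or.inr hs1))
    have hsign : ∀ s, x < s → s < (Q - 1) / Q → Gdfun Q c s ≤ 0 := by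
      intro s hs1 hs2
      have h := hmonoGd (Set.mem_Icc.mpr ⟨by linarith, hs2.le⟩)
        (Set.mem_Icc.mpr ⟨by linarith, le_rfl⟩) hs2
      simp only at h
      rw [Gd_root2 Q c hQ hce] at h
      linarith
    have h := GA Q c x ((Q - 1) / Q) hQ hx0 hhatlt hx2 hsign
    rw [G_root2 Q c hQ hce] at h
    linarith
  have R4 : ∀ x : ℝ, (Q - 1) / Q ≤ x → x < 1 → 0 ≤ Gfun Q c x := by
    intro x hx1 hx2
    have hhat0 : 0 < (Q - 1) / Q := by positivity
    have hmonoGd := GdSM Q c ((Q - 1) / Q) x hQ hhat0 hx2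
      (fun s hs1 hs2 => sign_out s (by linarith [hhat0])
        (Or.inr (by linarith)))
    have hsign : ∀ s, (Q - 1) / Q < s → s < x → 0 ≤ Gdfun Q c s := by
      intro s hs1 hs2
      have h := hmonoGd (Set.mem_Icc.mpr ⟨le_rfl, by linarith⟩)
        (Set.mem_Icc.mpr ⟨hs1.le, hs2.le⟩) hs1
      simp only at h
      rw [Gd_root2 Q c hQ hce] at h
      linarith
    have h := GM Q c ((Q - 1) / Q) x hQ hhat0 hx2 hx1 hsign
    rw [G_root2 Q c hQ hce] at h
    linarith
  have R2 : ∀ x : ℝ, 1 / 2 - r ≤ x → x ≤ 1 / 2 + r → 0 ≤ Gfun Q c x := by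
    intro x hx1 hx2
    have hx0 : 0 < x := by linarith
    have hxlt1 : x < 1 := by linarith [hhatge, hhatlt]
    have hantiGd := GdSA Q c (1 / 2 - r) (1 / 2 + r) hQ ha₁pos
      (by linarith [hhatge, hhatlt]) sign_mid
    rcases le_or_gt 0 (Gdfun Q c x) with hgd | hgd
    · have hsign : ∀ s, 1 / 2 - r < s → s < x → 0 ≤ Gdfun Q c s := by
        intro s hs1 hs2
        have h := hantiGd (Set.mem_Icc.mpr ⟨hs1.le, by linarith⟩)
          (Set.mem_Icc.mpr ⟨hx1, hx2⟩) hs2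
        simp only at h
        linarith
      have h := GM Q c (1 / 2 - r) x hQ ha₁pos hxlt1 hx1 hsign
      have hR1 : 0 ≤ Gfun Q c (1 / 2 - r) := R1 (1 / 2 - r) hQle le_rfl
      linarith
    · have hsign : ∀ s, x < s → s < 1 / 2 + r → Gdfun Q c s ≤ 0 := by
        intro s hs1 hs2
        have h := hantiGd (Set.mem_Icc.mpr ⟨hx1, hx2⟩)
          (Set.mem_Icc.mpr ⟨by linarith, hs2.le⟩) hs1
        simp only at h
        linarith
      have hlt1' : (1 / 2 + r : ℝ) < 1 := by linarith [hhatge, hhatlt]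
      have h := GA Q c x (1 / 2 + r) hQ hx0 hlt1' hx2 hsign
      have hR3 : 0 ≤ Gfun Q c (1 / 2 + r) := R3 (1 / 2 + r) le_rfl hhatge
      linarith
  rcases le_or_gt a (1 / 2 - r) with h | h
  · exact R1 a ha1 h
  rcases le_or_gt a (1 / 2 + r) with h2 | h2
  · exact R2 a h.le h2
  rcases le_or_gt a ((Q - 1) / Q) with h3 | h3
  · exact R3 a h2.le h3
  · exact R4 a h3.le ha2

/-- strict monotonicity of log t - βt below 1/β -/

lemma u_mono {β x y : ℝ} (hβ0 : 0 ≤ β) (hx : 0 < x) (hxy : x < y) (hy : β * y ≤ 1) :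
    Real.log x - β * x < Real.log y - β * y := by
  have hy0 : 0 < y := lt_trans hx hxy
  have h := Real.log_lt_sub_one_of_pos (show 0 < x / y by positivity)
    (by
      intro hc
      rw [div_eq_one_iff_eq (ne_of_gt hy0)] at hc
      exact (ne_of_lt hxy) hc)
  have hd : Real.log (x / y) = Real.log x - Real.log y :=
    Real.log_div (ne_of_gt hx) (ne_of_gt hy0)
  rw [hd] at h
  have h2 : β * (y - x) ≤ (y - x) / y := by
    rw [le_div_iff₀ hy0]
    nlinarith [mul_nonneg (sub_nonneg.mpr hxy.le) (sub_nonneg.mpr hy)]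
  have h3 : x / y - 1 = -((y - x) / y) := by field_simp; ring
  linarith [h, h3.le, h3.ge, h2]

lemma u_anti {β x y : ℝ} (hx : 0 < x) (hxy : x < y) (hx1 : 1 ≤ β * x) :
    Real.log y - β * y < Real.log x - β * x := by
  have hy0 : 0 < y := lt_trans hx hxy
  have h := Real.log_lt_sub_one_of_pos (show 0 < y / x by positivity)
    (by
      intro hc
      rw [div_eq_one_iff_eq (ne_of_gt hx)] at hc
      exact (ne_of_gt hxy) hc)
  have hd : Real.log (y / x) = Real.log y - Real.log x :=
    Real.log_div (ne_of_gt hy0) (ne_of_gt hx)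
  rw [hd] at h
  have h2 : (y - x) / x ≤ β * (y - x) := by
    rw [div_le_iff₀ hx]
    nlinarith [mul_nonneg (sub_nonneg.mpr hxy.le) (sub_nonneg.mpr hx1)]
  have h3 : y / x - 1 = (y - x) / x := by field_simp
  linarith [h, h3.le, h3.ge, h2]

/-- Structure of global minimizers: uniform, or one large coordinate with the rest equal. -/
lemma minimizer_structure {q : ℕ} [NeZero q] (hq : 3 ≤ q) {β : ℝ} (hβ0 : 0 ≤ β)
    {p : Fin q → ℝ} (hp : p ∈ minSetF q β 0) :
    p = (fun _ => 1 / (q : ℝ)) ∨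
      ∃ i₀ : Fin q, 1 / (q:ℝ) < p i₀ ∧ p i₀ < 1 ∧
        p = fun k => if k = i₀ then p i₀ else (1 - p i₀) / ((q:ℝ) - 1) := by
  have hpos := minimizer_pos hβ0 hp
  have hQ1 : (1:ℝ) < (q:ℝ) - 1 := by
    have : (3:ℝ) ≤ (q:ℝ) := by exact_mod_cast hq
    linarith
  have hlow_eq : ∀ i j : Fin q, β * p i ≤ 1 → β * p j ≤ 1 → p i = p j := by
    intro i j hi hj
    by_cases hij : i = j
    · rw [hij]
    · rcases lt_trichotomy (p i) (p j) with h | h | h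
      · exact absurd (minimizer_stat hβ0 hp hij) (ne_of_lt (u_mono hβ0 (hpos i) h hj))
      · exact h
      · exact absurd (minimizer_stat hβ0 hp hij) (ne_of_gt (u_mono hβ0 (hpos j) h hi))
  by_cases hA : ∀ i, β * p i ≤ 1
  · left
    obtain ⟨i₀⟩ : Nonempty (Fin q) := ⟨⟨0, by omega⟩⟩
    have hconst : ∀ k, p k = p i₀ := fun k => hlow_eq k i₀ (hA k) (hA i₀)
    have hsum : (∑ k, p k) = (q:ℝ) * p i₀ := by
      rw [Finset.sum_congr rfl (fun k _ => hconst k), Finset.sum_const, Finset.card_univ,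
        Fintype.card_fin, nsmul_eq_mul]
    have h1 : (q:ℝ) * p i₀ = 1 := by rw [← hsum]; exact hp.1.1
    funext k
    rw [hconst k]
    field_simp
    linarith [h1]
  · push_neg at hA
    obtain ⟨i₀, hi₀⟩ := hA
    right
    refine ⟨i₀, ?_, ?_, ?_⟩
    all_goals {
      have hothers : ∀ j, j ≠ i₀ → β * p j ≤ 1 := by
        intro j hj
        by_contra hjh
        push_neg at hjh
        rcases lt_trichotomy (p j) (p i₀) with h | h | h
        · exact absurd (minimizer_stat hβ0 hp hj) (ne_of_gt (u_anti (hpos j) h hjh.le))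
        · exact minimizer_nodouble hβ0 hp hj h hjh
        · exact absurd (minimizer_stat hβ0 hp (Ne.symm hj))
            (ne_of_gt (u_anti (hpos i₀) h hi₀.le))
      obtain ⟨j₁, hj₁⟩ : ∃ j : Fin q, j ≠ i₀ := by
        haveI : Nontrivial (Fin q) := Fin.nontrivial_iff_two_le.mpr (by omega)
        exact exists_ne i₀
      have hbval : ∀ j, j ≠ i₀ → p j = p j₁ := fun j hj =>
        hlow_eq j j₁ (hothers j hj) (hothers j₁ hj₁)
      have hsum : p i₀ + ((q:ℝ) - 1) * p j₁ = 1 := by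
        have h1 : p i₀ + ∑ k ∈ univ.erase i₀, p k = ∑ k, p k :=
          Finset.add_sum_erase univ p (Finset.mem_univ i₀)
        have h2 : ∑ k ∈ univ.erase i₀, p k = ((q:ℝ) - 1) * p j₁ := by
          rw [Finset.sum_congr rfl (fun k hk => hbval k (Finset.ne_of_mem_erase hk)),
            Finset.sum_const, Finset.card_erase_of_mem (Finset.mem_univ i₀),
            Finset.card_univ, Fintype.card_fin, nsmul_eq_mul]
          congr 1
          have hq1 : 1 ≤ q := by omega
          push_cast [Nat.cast_sub hq1]
          ring
        have h3 : (∑ k, p k) = p i₀ + ((q:ℝ) - 1) * p j₁ := by rw [← h1, h2]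
        rw [← h3]
        exact hp.1.1
      have hblt : p j₁ < p i₀ := by
        rcases lt_trichotomy (p j₁) (p i₀) with h | h | h
        · exact h
        · exact absurd (h ▸ hi₀) (by push_neg; exact hothers j₁ hj₁)
        · nlinarith [hothers j₁ hj₁, hi₀, hpos j₁, hpos i₀]
      have hagt : 1 / (q:ℝ) < p i₀ := by
        have hq0 : (0:ℝ) < q := qpos
        rw [div_lt_iff₀ hq0]
        nlinarith [hsum, hblt]
      have halt : p i₀ < 1 := by nlinarith [hsum, hpos j₁]
      have hform : p = fun k => if k = i₀ then p i₀ else (1 - p i₀) / ((q:ℝ) - 1) := by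
        funext k
        by_cases hk : k = i₀
        · simp [hk]
        · simp only [hk, if_false]
          rw [hbval k hk]
          rw [eq_div_iff (by linarith : (q:ℝ) - 1 ≠ 0)]
          linarith [hsum]
      first
        | exact hagt
        | exact halt
        | exact hform
    }

lemma sum_twoval {q : ℕ} [NeZero q] (i₀ : Fin q) (a b : ℝ) (f : ℝ → ℝ) :
    (∑ k : Fin q, f (if k = i₀ then a else b)) = f a + ((q:ℝ) - 1) * f b := by
  have key : ∀ k : Fin q, f (if k = i₀ then a else b)
      = f b + (if k = i₀ then f a - f b else 0) := by
    intro k; by_cases hk : k = i₀ <;> simp [hk]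
  simp only [key, Finset.sum_add_distrib, Finset.sum_const, Finset.card_univ,
    Fintype.card_fin, nsmul_eq_mul, Finset.sum_ite_eq' univ i₀, Finset.mem_univ, if_true]
  ring

lemma fFE_uniform (q : ℕ) [NeZero q] (β : ℝ) :
    fFE q β 0 (fun _ => 1 / (q:ℝ)) = -(β / (2 * (q:ℝ))) := by
  have hq0 : (0:ℝ) < q := qpos
  unfold fFE
  have e1 : (q:ℝ) * (1 / q) = 1 := by field_simp
  simp only [e1, Real.log_one, mul_zero, Finset.sum_const, Finset.card_univ,
    Fintype.card_fin, nsmul_eq_mul, zero_mul, sub_zero, smul_zero]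
  field_simp
  ring

lemma gap (q : ℕ) [NeZero q] (hq : 3 ≤ q) {β : ℝ} (hβ : β < betaC q) (i₀ : Fin q) {a : ℝ}
    (ha1 : 1 / (q:ℝ) < a) (ha2 : a < 1) :
    fFE q β 0 (fun _ => 1 / (q:ℝ)) <
      fFE q β 0 (fun k => if k = i₀ then a else (1 - a) / ((q:ℝ) - 1)) := by
  have hQ : (3:ℝ) ≤ (q:ℝ) := by exact_mod_cast hq
  have hQ0 : (0:ℝ) < (q:ℝ) := by linarith
  have hQ1 : (0:ℝ) < (q:ℝ) - 1 := by linarith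
  have hQ2 : (0:ℝ) < (q:ℝ) - 2 := by linarith
  have hL : 0 < Real.log ((q:ℝ) - 1) := Real.log_pos (by linarith)
  -- fFE at the two-valued configuration
  have hE1 : fFE q β 0 (fun k => if k = i₀ then a else (1 - a) / ((q:ℝ) - 1))
      = (a * Real.log ((q:ℝ) * a)
          + ((q:ℝ) - 1) * (((1 - a) / ((q:ℝ) - 1)) * Real.log ((q:ℝ) * ((1 - a) / ((q:ℝ) - 1)))))
        - β / 2 * (a ^ 2 + ((q:ℝ) - 1) * ((1 - a) / ((q:ℝ) - 1)) ^ 2) := by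
    unfold fFE
    rw [sum_twoval i₀ a ((1 - a) / ((q:ℝ) - 1)) (fun s => s * Real.log ((q:ℝ) * s)),
        sum_twoval i₀ a ((1 - a) / ((q:ℝ) - 1)) (fun s => s ^ 2)]
    ring
  have hE2 : fFE q β 0 (fun _ => 1 / (q:ℝ)) = -(β / (2 * (q:ℝ))) := fFE_uniform q β
  -- the key inequality at c = q log(q-1)/(q-2)
  have hc0 : 0 < (q:ℝ) * Real.log ((q:ℝ) - 1) / ((q:ℝ) - 2) := by positivity
  have hce : ((q:ℝ) * Real.log ((q:ℝ) - 1) / ((q:ℝ) - 2)) * ((q:ℝ) - 2)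
      = (q:ℝ) * Real.log ((q:ℝ) - 1) := by field_simp
  have hcQ : 2 * ((q:ℝ) * Real.log ((q:ℝ) - 1) / ((q:ℝ) - 2)) * ((q:ℝ) - 1) < (q:ℝ) ^ 2 := by
    have h := log_lt_aux ((q:ℝ) - 1) (by linarith)
    have e : ((q:ℝ) - 1) / 2 - 1 / (2 * ((q:ℝ) - 1)) = ((q:ℝ) ^ 2 - 2 * (q:ℝ)) / (2 * ((q:ℝ) - 1)) := by
      field_simp
      ring
    rw [e, lt_div_iff₀ (by linarith : (0:ℝ) < 2 * ((q:ℝ) - 1))] at h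
    have h' : 2 * ((q:ℝ) - 1) * Real.log ((q:ℝ) - 1) < (q:ℝ) * ((q:ℝ) - 2) := by nlinarith
    have hfrac : (0:ℝ) < (q:ℝ) / ((q:ℝ) - 2) := by positivity
    have h2 := mul_lt_mul_of_pos_right h' hfrac
    calc 2 * ((q:ℝ) * Real.log ((q:ℝ) - 1) / ((q:ℝ) - 2)) * ((q:ℝ) - 1)
        = (2 * ((q:ℝ) - 1) * Real.log ((q:ℝ) - 1)) * ((q:ℝ) / ((q:ℝ) - 2)) := by ring
      _ < ((q:ℝ) * ((q:ℝ) - 2)) * ((q:ℝ) / ((q:ℝ) - 2)) := h2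
      _ = (q:ℝ) ^ 2 := by field_simp
  have hkey := key1D_gen (q:ℝ) ((q:ℝ) * Real.log ((q:ℝ) - 1) / ((q:ℝ) - 2)) hQ hc0 hcQ hce
    ha1.le ha2
  unfold Gfun at hkey
  -- algebraic identities
  have hid1 : β / 2 * (a ^ 2 + ((q:ℝ) - 1) * ((1 - a) / ((q:ℝ) - 1)) ^ 2 - 1 / (q:ℝ))
      = β / 2 * ((a - 1 / (q:ℝ)) ^ 2 * ((q:ℝ) / ((q:ℝ) - 1))) := by
    congr 1
    field_simp
    ring
  have hid2 : ((q:ℝ) * Real.log ((q:ℝ) - 1) / ((q:ℝ) - 2)) * (a - 1 / (q:ℝ)) ^ 2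
      = betaC q / 2 * ((q:ℝ) / ((q:ℝ) - 1)) * (a - 1 / (q:ℝ)) ^ 2 := by
    congr 1
    unfold betaC
    field_simp
  have hqq : (0:ℝ) < (q:ℝ) / ((q:ℝ) - 1) := by positivity
  have hsq : (0:ℝ) < (a - 1 / (q:ℝ)) ^ 2 := pow_pos (by linarith) 2
  have h3 : 0 < (a - 1 / (q:ℝ)) ^ 2 * ((q:ℝ) / ((q:ℝ) - 1)) * (betaC q - β) :=
    mul_pos (mul_pos hsq hqq) (by linarith)
  have hβS : β / 2 * (a ^ 2 + ((q:ℝ) - 1) * ((1 - a) / ((q:ℝ) - 1)) ^ 2)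
      = β / 2 * ((a - 1 / (q:ℝ)) ^ 2 * ((q:ℝ) / ((q:ℝ) - 1))) + β / (2 * (q:ℝ)) := by
    field_simp
    ring
  rw [hE1, hE2]
  nlinarith [hkey, hβS, hid2, h3]

/-- For h = 0 and 0 ≤ β < β_c the unique global minimum point of f_{β,0} on ℋ
is the uniform vector (1/q,…,1/q). -/
theorem stmt_2 (q : ℕ) [NeZero q] (hq : 3 ≤ q) (β : ℝ) (hβ0 : 0 ≤ β) (hβ : β < betaC q) :
    minSetF q β 0 = {fun _ => 1 / (q : ℝ)} := by
  have hq0 : (0:ℝ) < q := qpos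
  have huS : (fun _ : Fin q => 1 / (q:ℝ)) ∈ simplexH q := by
    constructor
    · rw [Finset.sum_const, Finset.card_univ, Fintype.card_fin, nsmul_eq_mul]
      field_simp
    · intro i
      positivity
  have hcont : Continuous (fFE q β 0) := by
    unfold fFE
    have hterm : ∀ i : Fin q,
        Continuous (fun x : Fin q → ℝ => x i * Real.log ((q:ℝ) * x i)) := by
      intro i
      have h1 : Continuous (fun s : ℝ => ((q:ℝ) * s) * Real.log ((q:ℝ) * s)) :=
        Real.continuous_mul_log.comp (continuous_const.mul continuous_id)
      have h2 : Continuous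
          (fun x : Fin q → ℝ => (1 / (q:ℝ)) * (((q:ℝ) * x i) * Real.log ((q:ℝ) * x i))) :=
        continuous_const.mul (h1.comp (continuous_apply i))
      apply h2.congr
      intro x
      field_simp
    apply Continuous.sub
    apply Continuous.sub
    · exact continuous_finset_sum _ (fun i _ => hterm i)
    · exact continuous_const.mul (continuous_finset_sum _ (fun i _ => (continuous_apply i).pow 2))
    · exact continuous_const.mul (continuous_apply 0)
  have hcomp : IsCompact (simplexH q) := by
    have he : simplexH q = stdSimplex ℝ (Fin q) := by
      ext x
      exact ⟨fun h => ⟨h.2, h.1⟩, fun h => ⟨h.2, h.1⟩⟩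
    rw [he]
    exact isCompact_stdSimplex _ _
  obtain ⟨p, hpmem, hpmin⟩ := hcomp.exists_isMinOn ⟨_, huS⟩ hcont.continuousOn
  have hpM : p ∈ minSetF q β 0 := ⟨hpmem, fun y hy => isMinOn_iff.mp hpmin y hy⟩
  have hpu : p = fun _ => 1 / (q:ℝ) := by
    rcases minimizer_structure hq hβ0 hpM with h | ⟨i₀, h1, h2, h3⟩
    · exact h
    · exfalso
      have hlt := gap q hq hβ i₀ h1 h2
      rw [← h3] at hlt
      exact absurd (hpM.2 _ huS) (not_le.mpr hlt)
  have humin : ∀ y ∈ simplexH q, fFE q β 0 (fun _ => 1 / (q:ℝ)) ≤ fFE q β 0 y := by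
    intro y hy
    rw [← hpu]
    exact hpM.2 y hy
  ext x
  simp only [Set.mem_singleton_iff]
  constructor
  · intro hx
    rcases minimizer_structure hq hβ0 hx with h | ⟨i₀, h1, h2, h3⟩
    · exact h
    · exfalso
      have hlt := gap q hq hβ i₀ h1 h2
      rw [← h3] at hlt
      exact absurd (hx.2 _ huS) (not_le.mpr hlt)
  · rintro rfl
    exact ⟨huS, humin⟩


end CWP
end
end
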